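/- Let A ∈ 𝓡 be a fixed set and let X^(1), X^(2) be independent random vectors in [0,∞)^d with distributions F_1, F_2 ∈ 𝓣_A respectively. Then F_A^{(1)} * F_A^{(2)} ∈ 𝓐 (where F_A^{(1)} * F_A^{(2)} is the distribution of Y_A^{(1)} + Y_A^{(2)} for independent Y_A^{(1)} ~ F_A^{(1)}, Y_A^{(2)} ~ F_A^{(2)}) if and only if F_1 * F_2 ∈ 𝓐_A (where F_1 * F_2 is the distribution of X^(1) + X^(2)). -/

import Mathlib

open MeasureTheory ProbabilityTheory Filter Topology
open scoped Pointwise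

namespace Paper

variable {d : ℕ} {Ω : Type*} [MeasurableSpace Ω]

/-- The family `𝓡` of open, increasing sets with convex complement, bounded away from `0`. -/
structure IsRSet (d : ℕ) (A : Set (Fin d → ℝ)) : Prop where
  isOpen : IsOpen A
  increasing : ∀ u ∈ A, ∀ v : Fin d → ℝ, (∀ i, 0 ≤ v i) → u + v ∈ A
  convex_compl : Convex ℝ Aᶜ
  zero_notMem_closure : (0 : Fin d → ℝ) ∉ closure A

/-- `Y_A(z) = sup { u > 0 : z ∈ u A }`. -/
noncomputable def suprA (A : Set (Fin d → ℝ)) (z : Fin d → ℝ) : ℝ :=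
  sSup {u : ℝ | 0 < u ∧ z ∈ u • A}

/-- `F_A`, the distribution of `Y_A = suprA A ∘ X` under `P`. -/
noncomputable def FA (P : Measure Ω) (A : Set (Fin d → ℝ)) (X : Ω → Fin d → ℝ) :
    Measure ℝ :=
  P.map (fun ω => suprA A (X ω))

/-- `F (x A) = P[X ∈ x A]` as a real number. -/
noncomputable def vTail (P : Measure Ω) (A : Set (Fin d → ℝ)) (X : Ω → Fin d → ℝ)
    (x : ℝ) : ℝ :=
  (P {ω | X ω ∈ x • A}).toReal

/-- Tail `ν(x, ∞)` of a measure on `ℝ`, as a real number. -/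
noncomputable def mTail (ν : Measure ℝ) (x : ℝ) : ℝ := (ν (Set.Ioi x)).toReal

/-- Convolution of two measures on `ℝ`. -/
noncomputable def mConv (μ ν : Measure ℝ) : Measure ℝ :=
  (μ.prod ν).map (fun p => p.1 + p.2)

/-- `n`-fold convolution power. -/
noncomputable def mConvN (ν : Measure ℝ) : ℕ → Measure ℝ
  | 0 => Measure.dirac 0
  | n + 1 => mConv (mConvN ν n) ν

/-- Long-tailed class `𝓛`. -/
def MemL (ν : Measure ℝ) : Prop :=
  ∀ a : ℝ, 0 < a → Tendsto (fun x => mTail ν (x - a) / mTail ν x) atTop (𝓝 1)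

/-- Subexponential class `𝓢`. -/
def MemS (ν : Measure ℝ) : Prop :=
  Tendsto (fun x => mTail (mConv ν ν) x / mTail ν x) atTop (𝓝 2)

/-- Dominatedly varying class `𝓓`. -/
def MemD (ν : Measure ℝ) : Prop :=
  ∀ y : ℝ, 0 < y → y < 1 → ∃ C : ℝ, ∀ᶠ x in atTop, mTail ν (y * x) / mTail ν x ≤ C

/-- Positively decreasing class `𝓟𝓓`. -/
def MemPD (ν : Measure ℝ) : Prop :=
  ∀ b : ℝ, 1 < b → ∃ c : ℝ, c < 1 ∧ ∀ᶠ x in atTop, mTail ν (b * x) / mTail ν x ≤ c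

/-- Consistently varying class `𝓒`. -/
def MemC (ν : Measure ℝ) : Prop :=
  Tendsto (fun b : ℝ => Filter.liminf (fun x => mTail ν (b * x) / mTail ν x) atTop)
    (nhdsWithin 1 (Set.Ioi 1)) (𝓝 1)

/-- `𝓐 = 𝓢 ∩ 𝓟𝓓`. -/
def MemA (ν : Measure ℝ) : Prop := MemS ν ∧ MemPD ν

/-- `𝓣 = 𝓛 ∩ 𝓟𝓓`. -/
def MemT (ν : Measure ℝ) : Prop := MemL ν ∧ MemPD ν

/-- Regular variation of index `-α` of the tail of `ν`. -/
def MemRV (ν : Measure ℝ) (α : ℝ) : Prop :=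
  ∀ t : ℝ, 0 < t → Tendsto (fun x => mTail ν (t * x) / mTail ν x) atTop (𝓝 (t ^ (-α)))

/-- Weak tail-equivalence `f ≍ g`. -/
def WeakTailEquiv (f g : ℝ → ℝ) : Prop :=
  ∃ c₁ c₂ : ℝ, 0 < c₁ ∧ ∀ᶠ x in atTop, c₁ * g x ≤ f x ∧ f x ≤ c₂ * g x

/-- (Standard) multivariate regular variation `F ∈ MRV(α, V, μ)` of the distribution of `X`. -/
structure IsMRV (P : Measure Ω) (X : Ω → Fin d → ℝ) (α : ℝ) (V : Measure ℝ)
    (μ : Measure (Fin d → ℝ)) : Prop where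
  alpha_pos : 0 < α
  V_prob : IsProbabilityMeasure V
  V_rv : MemRV V α
  mu_ne_zero : ∃ B : Set (Fin d → ℝ), (0 : Fin d → ℝ) ∉ closure B ∧ 0 < μ B
  mu_radon : ∀ B : Set (Fin d → ℝ), (0 : Fin d → ℝ) ∉ closure B → μ B ≠ ⊤
  tendsto : ∀ B : Set (Fin d → ℝ), MeasurableSet B → (0 : Fin d → ℝ) ∉ closure B →
    μ (frontier B) = 0 →
    Tendsto (fun x => vTail P B X x / mTail V x) atTop (𝓝 ((μ B).toReal))

/-- Support of a distribution on `ℝ`. -/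
def measSupport (ν : Measure ℝ) : Set ℝ := {t | ∀ U ∈ 𝓝 t, 0 < ν U}

/-- Assumption `CD_A`: conditional dependence of `(X, Θ)` on `A` with transfer function `h`:
`P[Y_A > x | Θ = t] ~ h(t) P[Y_A > x]` uniformly on the support of the distribution of `Θ`. -/
def CDA (P : Measure Ω) [IsFiniteMeasure P] (A : Set (Fin d → ℝ))
    (X : Ω → Fin d → ℝ) (Θ : Ω → ℝ) (h : ℝ → ℝ) : Prop :=
  ∀ ε : ℝ, 0 < ε → ∀ᶠ x in atTop, ∀ t ∈ measSupport (P.map Θ),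
    |((condDistrib (fun ω => suprA A (X ω)) Θ P) t (Set.Ioi x)).toReal /
        (h t * (P {ω | x < suprA A (X ω)}).toReal) - 1| ≤ ε

/-- Assumption `B_A`: `P[Θ > c x] = o(P[Θ Y_A > x])` for all `c > 0`. -/
def BA (P : Measure Ω) (A : Set (Fin d → ℝ)) (X : Ω → Fin d → ℝ) (Θ : Ω → ℝ) : Prop :=
  ∀ c : ℝ, 0 < c →
    Tendsto (fun x => (P {ω | c * x < Θ ω}).toReal /
      (P {ω | x < Θ ω * suprA A (X ω)}).toReal) atTop (𝓝 0)

/-- Assumption `B_A` in the form `P[Θ > c x] = o(P[Θ X ∈ x A])` for all `c > 0`. -/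
def BA' (P : Measure Ω) (A : Set (Fin d → ℝ)) (X : Ω → Fin d → ℝ) (Θ : Ω → ℝ) : Prop :=
  ∀ c : ℝ, 0 < c →
    Tendsto (fun x => (P {ω | c * x < Θ ω}).toReal /
      (P {ω | Θ ω • X ω ∈ x • A}).toReal) atTop (𝓝 0)



section Aux
open Set
open scoped ENNReal

lemma mTail_nonneg (ν : Measure ℝ) (x : ℝ) : 0 ≤ mTail ν x := ENNReal.toReal_nonneg

lemma mTail_anti (ν : Measure ℝ) [IsFiniteMeasure ν] : Antitone (mTail ν) := by
  intro a b hab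
  exact ENNReal.toReal_le_toReal (measure_ne_top _ _) (measure_ne_top _ _) |>.2
    (measure_mono (Ioi_subset_Ioi hab))

lemma mTail_le_one (ν : Measure ℝ) [IsProbabilityMeasure ν] (x : ℝ) : mTail ν x ≤ 1 := by
  have h1 : ν (Ioi x) ≤ 1 := prob_le_one
  have := ENNReal.toReal_le_toReal (measure_ne_top _ _) (ENNReal.one_ne_top) |>.2 h1
  simpa [mTail] using this

lemma tendsto_mTail_zero (ν : Measure ℝ) [IsFiniteMeasure ν] :
    Tendsto (mTail ν) atTop (𝓝 0) := by
  have h : Tendsto (fun x : ℝ => ν (Ioi x)) atTop (𝓝 (ν (⋂ x : ℝ, Ioi x))) := by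
    refine tendsto_measure_iInter_atTop (fun x => (measurableSet_Ioi).nullMeasurableSet)
      (fun a b hab => Ioi_subset_Ioi hab) ⟨0, measure_ne_top _ _⟩
  have h0 : (⋂ x : ℝ, Ioi x) = (∅ : Set ℝ) := by
    ext y; simp only [mem_iInter, mem_Ioi, mem_empty_iff_false, iff_false, not_forall, not_lt]
    exact ⟨y, le_refl y⟩
  rw [h0, measure_empty] at h
  exact (ENNReal.tendsto_toReal (by simp)).comp h

/-- From long-tailedness, tails are everywhere positive. -/
lemma mTail_pos_of_memL (ν : Measure ℝ) [IsFiniteMeasure ν] (hL : MemL ν) (x : ℝ) :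
    0 < mTail ν x := by
  by_contra h
  push_neg at h
  have hx0 : mTail ν x = 0 := le_antisymm h (mTail_nonneg ν x)
  have hev : ∀ᶠ y in atTop, (fun y => mTail ν (y - 1) / mTail ν y) y = 0 := by
    filter_upwards [eventually_ge_atTop (x + 1)] with y hy
    have h1 : mTail ν (y - 1) = 0 :=
      le_antisymm (hx0 ▸ mTail_anti ν (by linarith)) (mTail_nonneg ν _)
    simp [h1]
  have := tendsto_nhds_unique ((hL 1 one_pos).congr' (by filter_upwards [hev] with y hy; rw [hy]))
    tendsto_const_nhds
  norm_num at this

/-- The "both large" cross set. -/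
def crossSet (h₁ h₂ x : ℝ) : Set (ℝ × ℝ) := {p | h₁ < p.1 ∧ h₂ < p.2 ∧ x < p.1 + p.2}

def sumSet (x : ℝ) : Set (ℝ × ℝ) := {p | x < p.1 + p.2}

lemma measurableSet_sumSet (x : ℝ) : MeasurableSet (sumSet x) :=
  measurableSet_lt measurable_const (measurable_fst.add measurable_snd)

lemma measurableSet_crossSet (h₁ h₂ x : ℝ) : MeasurableSet (crossSet h₁ h₂ x) := by
  refine MeasurableSet.inter (measurable_fst measurableSet_Ioi) ?_
  exact MeasurableSet.inter (measurable_snd measurableSet_Ioi) (measurableSet_sumSet x)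

lemma mConv_Ioi (ρ σ : Measure ℝ) [SFinite ρ] [SFinite σ] (x : ℝ) :
    (mConv ρ σ) (Ioi x) = (ρ.prod σ) (sumSet x) := by
  rw [mConv, Measure.map_apply (f := fun p : ℝ × ℝ => p.1 + p.2) (measurable_fst.add measurable_snd) measurableSet_Ioi]
  rfl

lemma crossSet_section₁ (h₁ h₂ x u : ℝ) :
    Prod.mk u ⁻¹' crossSet h₁ h₂ x = if h₁ < u then Ioi (max h₂ (x - u)) else ∅ := by
  ext v
  by_cases h : h₁ < u <;>
    simp [crossSet, h, mem_Ioi, max_lt_iff, sub_lt_iff_lt_add, and_comm, add_comm]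

lemma crossSet_section₂ (h₁ h₂ x v : ℝ) :
    (fun u => (u, v)) ⁻¹' crossSet h₁ h₂ x = if h₂ < v then Ioi (max h₁ (x - v)) else ∅ := by
  ext u
  by_cases h : h₂ < v <;>
    simp [crossSet, h, mem_Ioi, max_lt_iff, sub_lt_iff_lt_add, and_comm]

lemma cross_apply₁ (ρ σ : Measure ℝ) [SFinite σ] (h₁ h₂ x : ℝ) :
    (ρ.prod σ) (crossSet h₁ h₂ x) =
      ∫⁻ u, (if h₁ < u then σ (Ioi (max h₂ (x - u))) else 0) ∂ρ := by
  rw [Measure.prod_apply (measurableSet_crossSet h₁ h₂ x)]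
  congr 1; ext u
  rw [crossSet_section₁]
  by_cases h : h₁ < u <;> simp [h]

lemma cross_apply₂ (ρ σ : Measure ℝ) [SFinite ρ] [SFinite σ] (h₁ h₂ x : ℝ) :
    (ρ.prod σ) (crossSet h₁ h₂ x) =
      ∫⁻ v, (if h₂ < v then ρ (Ioi (max h₁ (x - v))) else 0) ∂σ := by
  rw [Measure.prod_apply_symm (measurableSet_crossSet h₁ h₂ x)]
  congr 1; ext v
  rw [crossSet_section₂]
  by_cases h : h₂ < v <;> simp [h]

lemma cross_replace₂ (ρ σ σ' : Measure ℝ) [SFinite σ] [SFinite σ'] (h₁ h₂ x a : ℝ)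
    (ha : 0 ≤ a) (K : ℝ≥0∞) (hK : K ≠ ⊤)
    (hcomp : ∀ z, h₂ ≤ z → σ (Ioi z) ≤ K * σ' (Ioi (z - a))) :
    (ρ.prod σ) (crossSet h₁ h₂ x) ≤ K * (ρ.prod σ') (crossSet h₁ (h₂ - a) (x - a)) := by
  rw [cross_apply₁, cross_apply₁]
  rw [← lintegral_const_mul' K _ hK]
  refine lintegral_mono fun u => ?_
  by_cases h : h₁ < u
  · simp only [h, if_true]
    calc σ (Ioi (max h₂ (x - u))) ≤ K * σ' (Ioi (max h₂ (x - u) - a)) :=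
          hcomp _ (le_max_left _ _)
      _ = K * σ' (Ioi (max (h₂ - a) (x - a - u))) := by
          have he : h₂ ⊔ (x - u) - a = (h₂ - a) ⊔ (x - a - u) := by
            rw [← max_sub_sub_right]; congr 1; ring
          rw [← he]
  · simp [h]

lemma cross_replace₁ (ρ ρ' σ : Measure ℝ) [SFinite ρ] [SFinite ρ'] [SFinite σ] (h₁ h₂ x a : ℝ)
    (ha : 0 ≤ a) (K : ℝ≥0∞) (hK : K ≠ ⊤)
    (hcomp : ∀ z, h₁ ≤ z → ρ (Ioi z) ≤ K * ρ' (Ioi (z - a))) :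
    (ρ.prod σ) (crossSet h₁ h₂ x) ≤ K * (ρ'.prod σ) (crossSet (h₁ - a) h₂ (x - a)) := by
  rw [cross_apply₂, cross_apply₂]
  rw [← lintegral_const_mul' K _ hK]
  refine lintegral_mono fun v => ?_
  by_cases h : h₂ < v
  · simp only [h, if_true]
    calc ρ (Ioi (max h₁ (x - v))) ≤ K * ρ' (Ioi (max h₁ (x - v) - a)) :=
          hcomp _ (le_max_left _ _)
      _ = K * ρ' (Ioi (max (h₁ - a) (x - a - v))) := by
          have he : h₁ ⊔ (x - v) - a = (h₁ - a) ⊔ (x - a - v) := by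
            rw [← max_sub_sub_right]; congr 1; ring
          rw [← he]
  · simp [h]

section parts
variable (ρ σ τ : Measure ℝ) [IsProbabilityMeasure ρ] [IsProbabilityMeasure σ]
  [IsProbabilityMeasure τ]

lemma Ici_one (hsupp : σ (Iio 0) = 0) : σ (Ici 0) = 1 := by
  have h := measure_add_measure_compl (μ := σ) (measurableSet_Ici (a := (0:ℝ)))
  rw [compl_Ici, hsupp, add_zero] at h
  simpa using h

lemma Iic_le_Icc (hsupp : σ (Iio 0) = 0) (h : ℝ) : σ (Iic h) ≤ σ (Icc 0 h) := by
  calc σ (Iic h) ≤ σ (Iio 0 ∪ Icc 0 h) := by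
        refine measure_mono fun y hy => ?_
        rcases lt_or_ge y 0 with h0 | h0
        · exact Or.inl h0
        · exact Or.inr ⟨h0, hy⟩
    _ ≤ σ (Iio 0) + σ (Icc 0 h) := measure_union_le _ _
    _ = σ (Icc 0 h) := by rw [hsupp, zero_add]

lemma single_le_conv₁ (hsupp : σ (Iio 0) = 0) (x : ℝ) :
    ρ (Ioi x) ≤ (ρ.prod σ) (sumSet x) := by
  have hsub : (Ioi x ×ˢ Ici 0 : Set (ℝ × ℝ)) ⊆ sumSet x := by
    rintro ⟨u, v⟩ ⟨hu, hv⟩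
    simp only [sumSet, mem_setOf_eq]
    simp only [mem_Ioi] at hu; simp only [mem_Ici] at hv
    linarith
  calc ρ (Ioi x) = ρ (Ioi x) * σ (Ici 0) := by rw [Ici_one σ hsupp, mul_one]
    _ = (ρ.prod σ) (Ioi x ×ˢ Ici 0) := (Measure.prod_prod _ _).symm
    _ ≤ _ := measure_mono hsub

lemma single_le_conv₂ (hsupp : ρ (Iio 0) = 0) (x : ℝ) :
    σ (Ioi x) ≤ (ρ.prod σ) (sumSet x) := by
  have hsub : (Ici 0 ×ˢ Ioi x : Set (ℝ × ℝ)) ⊆ sumSet x := by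
    rintro ⟨u, v⟩ ⟨hu, hv⟩
    simp only [sumSet, mem_setOf_eq]
    simp only [mem_Ici] at hu; simp only [mem_Ioi] at hv
    linarith
  calc σ (Ioi x) = ρ (Ici 0) * σ (Ioi x) := by rw [Ici_one ρ hsupp, one_mul]
    _ = (ρ.prod σ) (Ici 0 ×ˢ Ioi x) := (Measure.prod_prod _ _).symm
    _ ≤ _ := measure_mono hsub

lemma conv_le_split (h x : ℝ) :
    (ρ.prod σ) (sumSet x) ≤ ρ (Ioi (x - h)) + σ (Ioi (x - h)) + (ρ.prod σ) (crossSet h h x) := by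
  have hsub : sumSet x ⊆ (Ioi (x - h) ×ˢ univ) ∪ ((univ ×ˢ Ioi (x - h)) ∪ crossSet h h x) := by
    rintro ⟨u, v⟩ huv
    simp only [sumSet, mem_setOf_eq] at huv
    by_cases h1 : x - h < u
    · exact Or.inl ⟨h1, trivial⟩
    · push_neg at h1
      by_cases h2 : x - h < v
      · exact Or.inr (Or.inl ⟨trivial, h2⟩)
      · push_neg at h2
        refine Or.inr (Or.inr ⟨by linarith, by linarith, huv⟩)
  calc (ρ.prod σ) (sumSet x) ≤ _ := measure_mono hsub
    _ ≤ (ρ.prod σ) (Ioi (x - h) ×ˢ univ) + ((ρ.prod σ) (univ ×ˢ Ioi (x - h)) +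
        (ρ.prod σ) (crossSet h h x)) :=
      le_trans (measure_union_le _ _) (by gcongr; exact measure_union_le _ _)
    _ = ρ (Ioi (x - h)) + σ (Ioi (x - h)) + (ρ.prod σ) (crossSet h h x) := by
      rw [Measure.prod_prod, Measure.prod_prod]
      simp [measure_univ]
      ring

lemma J_partition (hsupp : τ (Iio 0) = 0) (h x : ℝ) (hh : 0 ≤ h) (hhx : h ≤ x) :
    (τ.prod τ) (crossSet h h x) + (τ (Iic h) * τ (Ioi x) + τ (Iic h) * τ (Ioi x)) ≤
      (τ.prod τ) (sumSet x) := by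
  set RA : Set (ℝ × ℝ) := Ioi x ×ˢ Icc 0 h
  set RB : Set (ℝ × ℝ) := Icc 0 h ×ˢ Ioi x
  have hCsub : crossSet h h x ⊆ sumSet x := fun p hp => hp.2.2
  have hAsub : RA ⊆ sumSet x := by
    rintro ⟨u, v⟩ ⟨hu, hv⟩
    simp only [mem_Ioi] at hu; simp only [mem_Icc] at hv
    simp only [sumSet, mem_setOf_eq]; linarith [hv.1]
  have hBsub : RB ⊆ sumSet x := by
    rintro ⟨u, v⟩ ⟨hu, hv⟩
    simp only [mem_Icc] at hu; simp only [mem_Ioi] at hv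
    simp only [sumSet, mem_setOf_eq]; linarith [hu.1]
  have hdCA : Disjoint (crossSet h h x) RA := by
    rw [Set.disjoint_left]
    rintro ⟨u, v⟩ hc ⟨hu, hv⟩
    simp only [mem_Icc] at hv
    exact absurd hv.2 (not_le.2 hc.2.1)
  have hdCB : Disjoint (crossSet h h x) RB := by
    rw [Set.disjoint_left]
    rintro ⟨u, v⟩ hc ⟨hu, hv⟩
    simp only [mem_Icc] at hu
    exact absurd hu.2 (not_le.2 hc.1)
  have hdAB : Disjoint RA RB := by
    rw [Set.disjoint_left]
    rintro ⟨u, v⟩ ⟨hu, _⟩ ⟨hu', _⟩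
    simp only [mem_Ioi] at hu; simp only [mem_Icc] at hu'
    linarith [hu'.2]
  have hmRA : MeasurableSet RA := (measurableSet_Ioi).prod measurableSet_Icc
  have hmRB : MeasurableSet RB := (measurableSet_Icc).prod measurableSet_Ioi
  have hunion : (τ.prod τ) (crossSet h h x ∪ (RA ∪ RB)) =
      (τ.prod τ) (crossSet h h x) + ((τ.prod τ) RA + (τ.prod τ) RB) := by
    rw [measure_union (hdCA.union_right hdCB) (hmRA.union hmRB), measure_union hdAB hmRB]
  calc (τ.prod τ) (crossSet h h x) + (τ (Iic h) * τ (Ioi x) + τ (Iic h) * τ (Ioi x)) ≤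
      (τ.prod τ) (crossSet h h x) + ((τ.prod τ) RA + (τ.prod τ) RB) := by
        have hRA : τ (Iic h) * τ (Ioi x) ≤ (τ.prod τ) RA := by
          rw [Measure.prod_prod, mul_comm]
          exact mul_le_mul' le_rfl (Iic_le_Icc τ hsupp h)
        have hRB : τ (Iic h) * τ (Ioi x) ≤ (τ.prod τ) RB := by
          rw [Measure.prod_prod]
          exact mul_le_mul' (Iic_le_Icc τ hsupp h) le_rfl
        exact add_le_add le_rfl (add_le_add hRA hRB)
    _ = (τ.prod τ) (crossSet h h x ∪ (RA ∪ RB)) := hunion.symm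
    _ ≤ (τ.prod τ) (sumSet x) := measure_mono (by
        intro p hp
        rcases hp with hp | hp | hp
        exacts [hCsub hp, hAsub hp, hBsub hp])

lemma L_decomp (hsupp : τ (Iio 0) = 0) (c x : ℝ) (hc : 0 ≤ c) (hcx : c ≤ x) :
    τ (Iic c) * τ (Ioi x) + τ (Ioc c x) * τ (Ioi (x - c)) + τ (Ioi x) ≤
      (τ.prod τ) (sumSet x) := by
  set G1 : Set (ℝ × ℝ) := Icc 0 c ×ˢ Ioi x
  set G2 : Set (ℝ × ℝ) := Ioc c x ×ˢ Ioi (x - c)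
  set G3 : Set (ℝ × ℝ) := Ioi x ×ˢ Ici 0
  have h1 : G1 ⊆ sumSet x := by
    rintro ⟨u, v⟩ ⟨hu, hv⟩
    simp only [mem_Icc] at hu; simp only [mem_Ioi] at hv
    simp only [sumSet, mem_setOf_eq]; linarith [hu.1]
  have h2 : G2 ⊆ sumSet x := by
    rintro ⟨u, v⟩ ⟨hu, hv⟩
    simp only [mem_Ioc] at hu; simp only [mem_Ioi] at hv
    simp only [sumSet, mem_setOf_eq]; linarith [hu.1]
  have h3 : G3 ⊆ sumSet x := by
    rintro ⟨u, v⟩ ⟨hu, hv⟩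
    simp only [mem_Ioi] at hu; simp only [mem_Ici] at hv
    simp only [sumSet, mem_setOf_eq]; linarith
  have hd12 : Disjoint G1 G2 := by
    rw [Set.disjoint_left]
    rintro ⟨u, v⟩ ⟨hu, _⟩ ⟨hu', _⟩
    simp only [mem_Icc] at hu; simp only [mem_Ioc] at hu'
    linarith [hu.2, hu'.1]
  have hd13 : Disjoint G1 G3 := by
    rw [Set.disjoint_left]
    rintro ⟨u, v⟩ ⟨hu, _⟩ ⟨hu', _⟩
    simp only [mem_Icc] at hu; simp only [mem_Ioi] at hu'
    linarith [hu.2]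
  have hd23 : Disjoint G2 G3 := by
    rw [Set.disjoint_left]
    rintro ⟨u, v⟩ ⟨hu, _⟩ ⟨hu', _⟩
    simp only [mem_Ioc] at hu; simp only [mem_Ioi] at hu'
    linarith [hu.2]
  have hm2 : MeasurableSet G2 := measurableSet_Ioc.prod measurableSet_Ioi
  have hm3 : MeasurableSet G3 := measurableSet_Ioi.prod measurableSet_Ici
  have hunion : (τ.prod τ) (G1 ∪ (G2 ∪ G3)) = (τ.prod τ) G1 + ((τ.prod τ) G2 + (τ.prod τ) G3) := by
    rw [measure_union (hd12.union_right hd13) (hm2.union hm3), measure_union hd23 hm3]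
  calc τ (Iic c) * τ (Ioi x) + τ (Ioc c x) * τ (Ioi (x - c)) + τ (Ioi x) ≤
      (τ.prod τ) G1 + ((τ.prod τ) G2 + (τ.prod τ) G3) := by
        rw [Measure.prod_prod, Measure.prod_prod, Measure.prod_prod, Ici_one τ hsupp, mul_one]
        rw [add_assoc]
        exact add_le_add (mul_le_mul' (Iic_le_Icc τ hsupp c) le_rfl) le_rfl
    _ = (τ.prod τ) (G1 ∪ (G2 ∪ G3)) := hunion.symm
    _ ≤ (τ.prod τ) (sumSet x) := measure_mono (by
        intro p hp
        rcases hp with hp | hp | hp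
        exacts [h1 hp, h2 hp, h3 hp])

lemma lower_incl_excl (hsupp : σ (Iio 0) = 0) (x : ℝ) (hx : 0 ≤ x) :
    2 * σ (Ioi x) ≤ (σ.prod σ) (sumSet x) + σ (Ioi x) * σ (Ioi x) := by
  set A : Set (ℝ × ℝ) := Ioi x ×ˢ Ici 0
  set B : Set (ℝ × ℝ) := Ici 0 ×ˢ Ioi x
  have hA : (σ.prod σ) A = σ (Ioi x) := by
    rw [Measure.prod_prod, Ici_one σ hsupp, mul_one]
  have hB : (σ.prod σ) B = σ (Ioi x) := by
    rw [Measure.prod_prod, Ici_one σ hsupp, one_mul]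
  have hABsub : A ∪ B ⊆ sumSet x := by
    rintro ⟨u, v⟩ (⟨hu, hv⟩ | ⟨hu, hv⟩) <;>
      · simp only [mem_Ioi, mem_Ici] at hu hv
        simp only [sumSet, mem_setOf_eq]; linarith
  have hABinter : A ∩ B ⊆ Ioi x ×ˢ Ioi x := by
    rintro ⟨u, v⟩ ⟨⟨hu, _⟩, ⟨_, hv⟩⟩
    exact ⟨hu, hv⟩
  have hmB : MeasurableSet B := measurableSet_Ici.prod measurableSet_Ioi
  have hkey : (σ.prod σ) (A ∪ B) + (σ.prod σ) (A ∩ B) = (σ.prod σ) A + (σ.prod σ) B :=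
    measure_union_add_inter (μ := σ.prod σ) A hmB
  calc 2 * σ (Ioi x) = (σ.prod σ) A + (σ.prod σ) B := by rw [hA, hB]; ring
    _ = (σ.prod σ) (A ∪ B) + (σ.prod σ) (A ∩ B) := hkey.symm
    _ ≤ (σ.prod σ) (sumSet x) + σ (Ioi x) * σ (Ioi x) :=
        add_le_add (measure_mono hABsub)
          (le_trans (measure_mono hABinter) (le_of_eq (Measure.prod_prod _ _)))

end parts

/-! Real-valued corollaries. -/

noncomputable def crossR (ρ σ : Measure ℝ) (h₁ h₂ x : ℝ) : ℝ :=
  ((ρ.prod σ) (crossSet h₁ h₂ x)).toReal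

lemma crossR_nonneg (ρ σ : Measure ℝ) (h₁ h₂ x : ℝ) : 0 ≤ crossR ρ σ h₁ h₂ x :=
  ENNReal.toReal_nonneg

lemma mTail_mConv (ρ σ : Measure ℝ) [SFinite ρ] [SFinite σ] (x : ℝ) :
    mTail (mConv ρ σ) x = ((ρ.prod σ) (sumSet x)).toReal := by
  rw [mTail, mConv_Ioi]

section realcors
variable (ρ σ τ : Measure ℝ) [IsProbabilityMeasure ρ] [IsProbabilityMeasure σ]
  [IsProbabilityMeasure τ]

lemma rc_split (h x : ℝ) :
    mTail (mConv ρ σ) x ≤ mTail ρ (x - h) + mTail σ (x - h) + crossR ρ σ h h x := by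
  rw [mTail_mConv]
  have := conv_le_split ρ σ h x
  have h1 := ENNReal.toReal_le_toReal
    (measure_ne_top _ _)
    (by
      refine ENNReal.add_ne_top.2 ⟨ENNReal.add_ne_top.2 ⟨measure_ne_top _ _, measure_ne_top _ _⟩,
        measure_ne_top _ _⟩) |>.2 this
  rw [ENNReal.toReal_add (ENNReal.add_ne_top.2 ⟨measure_ne_top _ _, measure_ne_top _ _⟩)
      (measure_ne_top _ _), ENNReal.toReal_add (measure_ne_top _ _) (measure_ne_top _ _)] at h1
  exact h1

lemma rc_single₁ (hsupp : σ (Iio 0) = 0) (x : ℝ) :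
    mTail ρ x ≤ mTail (mConv ρ σ) x := by
  rw [mTail_mConv, mTail]
  exact ENNReal.toReal_le_toReal (measure_ne_top _ _) (measure_ne_top _ _) |>.2
    (single_le_conv₁ ρ σ hsupp x)

lemma rc_single₂ (hsupp : ρ (Iio 0) = 0) (x : ℝ) :
    mTail σ x ≤ mTail (mConv ρ σ) x := by
  rw [mTail_mConv, mTail]
  exact ENNReal.toReal_le_toReal (measure_ne_top _ _) (measure_ne_top _ _) |>.2
    (single_le_conv₂ ρ σ hsupp x)

lemma rc_replace₂ (σ' : Measure ℝ) [IsProbabilityMeasure σ'] (h₁ h₂ x a K : ℝ)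
    (ha : 0 ≤ a) (hK : 0 ≤ K)
    (hcomp : ∀ z, h₂ ≤ z → mTail σ z ≤ K * mTail σ' (z - a)) :
    crossR ρ σ h₁ h₂ x ≤ K * crossR ρ σ' h₁ (h₂ - a) (x - a) := by
  have hcomp' : ∀ z, h₂ ≤ z → σ (Ioi z) ≤ ENNReal.ofReal K * σ' (Ioi (z - a)) := by
    intro z hz
    have h0 : σ (Ioi z) = ENNReal.ofReal (mTail σ z) := by
      rw [mTail, ENNReal.ofReal_toReal (measure_ne_top _ _)]
    rw [h0]
    calc ENNReal.ofReal (mTail σ z) ≤ ENNReal.ofReal (K * mTail σ' (z - a)) :=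
          ENNReal.ofReal_le_ofReal (hcomp z hz)
      _ = ENNReal.ofReal K * ENNReal.ofReal (mTail σ' (z - a)) :=
          ENNReal.ofReal_mul hK
      _ = ENNReal.ofReal K * σ' (Ioi (z - a)) := by
          rw [mTail, ENNReal.ofReal_toReal (measure_ne_top _ _)]
  have := cross_replace₂ ρ σ σ' h₁ h₂ x a ha (ENNReal.ofReal K) ENNReal.ofReal_ne_top hcomp'
  have h1 := ENNReal.toReal_le_toReal (measure_ne_top _ _)
    (ENNReal.mul_ne_top ENNReal.ofReal_ne_top (measure_ne_top _ _)) |>.2 this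
  rwa [ENNReal.toReal_mul, ENNReal.toReal_ofReal hK] at h1

lemma rc_replace₁ (ρ' : Measure ℝ) [IsProbabilityMeasure ρ'] (h₁ h₂ x a K : ℝ)
    (ha : 0 ≤ a) (hK : 0 ≤ K)
    (hcomp : ∀ z, h₁ ≤ z → mTail ρ z ≤ K * mTail ρ' (z - a)) :
    crossR ρ σ h₁ h₂ x ≤ K * crossR ρ' σ (h₁ - a) h₂ (x - a) := by
  have hcomp' : ∀ z, h₁ ≤ z → ρ (Ioi z) ≤ ENNReal.ofReal K * ρ' (Ioi (z - a)) := by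
    intro z hz
    have h0 : ρ (Ioi z) = ENNReal.ofReal (mTail ρ z) := by
      rw [mTail, ENNReal.ofReal_toReal (measure_ne_top _ _)]
    rw [h0]
    calc ENNReal.ofReal (mTail ρ z) ≤ ENNReal.ofReal (K * mTail ρ' (z - a)) :=
          ENNReal.ofReal_le_ofReal (hcomp z hz)
      _ = ENNReal.ofReal K * ENNReal.ofReal (mTail ρ' (z - a)) :=
          ENNReal.ofReal_mul hK
      _ = ENNReal.ofReal K * ρ' (Ioi (z - a)) := by
          rw [mTail, ENNReal.ofReal_toReal (measure_ne_top _ _)]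
  have := cross_replace₁ ρ ρ' σ h₁ h₂ x a ha (ENNReal.ofReal K) ENNReal.ofReal_ne_top hcomp'
  have h1 := ENNReal.toReal_le_toReal (measure_ne_top _ _)
    (ENNReal.mul_ne_top ENNReal.ofReal_ne_top (measure_ne_top _ _)) |>.2 this
  rwa [ENNReal.toReal_mul, ENNReal.toReal_ofReal hK] at h1

lemma rc_Iic (h : ℝ) : (τ (Iic h)).toReal = 1 - mTail τ h := by
  have hd : τ (Iic h) + τ (Ioi h) = 1 := by
    rw [← measure_union (Iic_disjoint_Ioi le_rfl) measurableSet_Ioi, Iic_union_Ioi, measure_univ]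
  have := congrArg ENNReal.toReal hd
  rw [ENNReal.toReal_add (measure_ne_top _ _) (measure_ne_top _ _)] at this
  simp only [ENNReal.toReal_one] at this
  rw [mTail]; linarith

lemma rc_Ioc (c x : ℝ) (hcx : c ≤ x) : (τ (Ioc c x)).toReal = mTail τ c - mTail τ x := by
  have hd : τ (Ioc c x) + τ (Ioi x) = τ (Ioi c) := by
    rw [← measure_union (by
        rw [Set.disjoint_left]; rintro y ⟨_, h2⟩ h3
        exact absurd (mem_Ioi.1 h3) (not_lt.2 h2)) measurableSet_Ioi, Ioc_union_Ioi_eq_Ioi hcx]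
  have := congrArg ENNReal.toReal hd
  rw [ENNReal.toReal_add (measure_ne_top _ _) (measure_ne_top _ _)] at this
  rw [mTail, mTail]; linarith

lemma rc_J (hsupp : τ (Iio 0) = 0) (h x : ℝ) (hh : 0 ≤ h) (hhx : h ≤ x) :
    crossR τ τ h h x + 2 * ((1 - mTail τ h) * mTail τ x) ≤ mTail (mConv τ τ) x := by
  have key := J_partition τ hsupp h x hh hhx
  have hm : τ (Iic h) * τ (Ioi x) ≠ ⊤ :=
    ENNReal.mul_ne_top (measure_ne_top _ _) (measure_ne_top _ _)
  have h1 := ENNReal.toReal_mono (measure_ne_top _ _) key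
  rw [ENNReal.toReal_add (measure_ne_top _ _) (ENNReal.add_ne_top.2 ⟨hm, hm⟩),
      ENNReal.toReal_add hm hm, ENNReal.toReal_mul] at h1
  rw [rc_Iic] at h1
  rw [mTail_mConv, crossR]
  simp only [mTail] at h1 ⊢
  linarith

lemma rc_L (hsupp : τ (Iio 0) = 0) (c x : ℝ) (hc : 0 ≤ c) (hcx : c ≤ x) :
    (1 - mTail τ c) * mTail τ x + (mTail τ c - mTail τ x) * mTail τ (x - c) + mTail τ x ≤
      mTail (mConv τ τ) x := by
  have key := L_decomp τ hsupp c x hc hcx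
  have hm1 : τ (Iic c) * τ (Ioi x) ≠ ⊤ :=
    ENNReal.mul_ne_top (measure_ne_top _ _) (measure_ne_top _ _)
  have hm2 : τ (Ioc c x) * τ (Ioi (x - c)) ≠ ⊤ :=
    ENNReal.mul_ne_top (measure_ne_top _ _) (measure_ne_top _ _)
  have h1 := ENNReal.toReal_mono (measure_ne_top _ _) key
  rw [ENNReal.toReal_add (ENNReal.add_ne_top.2 ⟨hm1, hm2⟩) (measure_ne_top _ _),
      ENNReal.toReal_add hm1 hm2, ENNReal.toReal_mul, ENNReal.toReal_mul] at h1
  rw [rc_Iic, rc_Ioc τ c x hcx] at h1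
  rw [mTail_mConv]
  simp only [mTail] at h1 ⊢
  linarith

lemma rc_lower (hsupp : σ (Iio 0) = 0) (x : ℝ) (hx : 0 ≤ x) :
    2 * mTail σ x ≤ mTail (mConv σ σ) x + mTail σ x * mTail σ x := by
  have key := lower_incl_excl σ hsupp x hx
  have hm : σ (Ioi x) * σ (Ioi x) ≠ ⊤ :=
    ENNReal.mul_ne_top (measure_ne_top _ _) (measure_ne_top _ _)
  have h1 := ENNReal.toReal_mono (ENNReal.add_ne_top.2 ⟨measure_ne_top _ _, hm⟩) key
  rw [ENNReal.toReal_mul, ENNReal.toReal_add (measure_ne_top _ _) hm, ENNReal.toReal_mul] at h1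
  have h2 : ((2:ℝ≥0∞)).toReal = 2 := by simp
  rw [h2] at h1
  rw [mTail_mConv]
  simp only [mTail] at h1 ⊢
  exact h1

end realcors

/-! Eventual forms and `𝓢 ⊆ 𝓛`. -/

lemma eventually_shift {Q : ℝ → Prop} (s : ℝ) (h : ∀ᶠ y in atTop, Q y) :
    ∀ᶠ x in atTop, Q (x + s) :=
  (tendsto_atTop_add_const_right atTop s tendsto_id).eventually h

lemma ev_memS_ub (τ : Measure ℝ) (hpos : ∀ x, 0 < mTail τ x) (hS : MemS τ) {ε : ℝ}
    (hε : 0 < ε) : ∀ᶠ x in atTop, mTail (mConv τ τ) x ≤ (2 + ε) * mTail τ x := by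
  have h := hS.eventually (eventually_le_nhds (by linarith : (2:ℝ) < 2 + ε))
  filter_upwards [h] with x hx
  rw [div_le_iff₀ (hpos x)] at hx
  linarith [hx]

lemma ev_memL_ub (ρ : Measure ℝ) [IsFiniteMeasure ρ] (hL : MemL ρ) (s : ℝ) (hs : 0 ≤ s) {ε : ℝ}
    (hε : 0 < ε) : ∀ᶠ x in atTop, mTail ρ (x - s) ≤ (1 + ε) * mTail ρ x := by
  rcases eq_or_lt_of_le hs with rfl | hs'
  · filter_upwards with x
    have := mTail_pos_of_memL ρ hL x
    simp only [sub_zero]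
    nlinarith
  · have h := (hL s hs').eventually (eventually_le_nhds (by linarith : (1:ℝ) < 1 + ε))
    filter_upwards [h] with x hx
    rw [div_le_iff₀ (mTail_pos_of_memL ρ hL x)] at hx
    linarith [hx]

/-- reversed shift: `mTail ρ x ≤ (1+ε) mTail ρ (x+s)` eventually. -/
lemma ev_memL_lb (ρ : Measure ℝ) [IsFiniteMeasure ρ] (hL : MemL ρ) (s : ℝ) (hs : 0 ≤ s) {ε : ℝ}
    (hε : 0 < ε) : ∀ᶠ x in atTop, mTail ρ x ≤ (1 + ε) * mTail ρ (x + s) := by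
  have h := eventually_shift (Q := fun y => mTail ρ (y - s) ≤ (1 + ε) * mTail ρ y) s
    (ev_memL_ub ρ hL s hs hε)
  filter_upwards [h] with x hx
  simpa using hx

lemma memL_of_memS (τ : Measure ℝ) [IsProbabilityMeasure τ] (hsupp : τ (Iio 0) = 0)
    (hpos : ∀ x, 0 < mTail τ x) (hS : MemS τ) : MemL τ := by
  intro a ha
  rw [Metric.tendsto_nhds]
  intro ε hε
  set ε' := min (ε / 4) (1 / 2) with hε'def
  have hε'pos : 0 < ε' := lt_min (by linarith) (by norm_num)
  have hε'le : ε' ≤ ε / 4 := min_le_left _ _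
  have hra : 0 < mTail τ a := hpos a
  set δ := ε' * mTail τ a / 2 with hδdef
  have hδpos : 0 < δ := by positivity
  have hSev := ev_memS_ub τ hpos hS hδpos
  have hsmall : ∀ᶠ x in atTop, mTail τ x ≤ ε' * mTail τ a / (2 * (1 + ε')) := by
    refine (tendsto_mTail_zero τ).eventually (eventually_le_nhds ?_)
    positivity
  have ha0 : 0 ≤ a := le_of_lt ha
  filter_upwards [hSev, hsmall, eventually_ge_atTop a] with x hx1 hx2 hxa
  have hqx : 0 < mTail τ x := hpos x
  have hqxa : 0 < mTail τ (x - a) := hpos (x - a)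
  have hLd := rc_L τ hsupp a x ha0 hxa
  have key : (mTail τ a - mTail τ x) * mTail τ (x - a) ≤ (δ + mTail τ a) * mTail τ x := by
    nlinarith [hLd, hx1]
  have hcond : (1 + ε') * mTail τ x ≤ ε' * mTail τ a / 2 := by
    calc (1 + ε') * mTail τ x ≤ (1 + ε') * (ε' * mTail τ a / (2 * (1 + ε'))) :=
          mul_le_mul_of_nonneg_left hx2 (by positivity)
      _ = ε' * mTail τ a / 2 := by field_simp
  have hden : 0 < mTail τ a - mTail τ x := by nlinarith [hcond, hε'pos, hqx]
  have hfinal : mTail τ (x - a) ≤ (1 + ε') * mTail τ x := by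
    nlinarith [key, hden, hqx, hqxa, mul_pos hden hqx]
  have hge : mTail τ x ≤ mTail τ (x - a) := mTail_anti τ (by linarith)
  rw [Real.dist_eq, abs_lt]
  constructor
  · have : 1 ≤ mTail τ (x - a) / mTail τ x := (le_div_iff₀ hqx).2 (by linarith)
    linarith
  · have : mTail τ (x - a) / mTail τ x ≤ 1 + ε' := (div_le_iff₀ hqx).2 hfinal
    linarith

/-! Main upper bound: `p(x) ≤ (1+ε)(F̄₁(x)+F̄₂(x))` eventually. -/

lemma arith_main {ε ε' m p : ℝ} (hε : 0 < ε) (h1 : 0 < ε') (h2 : ε' ≤ ε / 16)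
    (h3 : ε' ≤ 1 / 16) (hm : 0 ≤ m) (hp : 0 ≤ p)
    (h : p ≤ (1 + ε') * m + 3 * ε' * (1 + ε') ^ 3 * p) : p ≤ (1 + ε) * m := by
  have hu : 1 + ε' ≤ 17 / 16 := by linarith
  have hcube : (1 + ε') ^ 3 ≤ (17 / 16) ^ 3 := pow_le_pow_left₀ (by linarith) hu 3
  have hcube2 : (1 + ε') ^ 3 ≤ 2 := by nlinarith
  have hk := mul_le_mul_of_nonneg_left hcube2 (by positivity : (0:ℝ) ≤ 3 * ε')
  have hkp := mul_le_mul_of_nonneg_right hk hp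
  have h5 : p * (1 - 6 * ε') ≤ (1 + ε') * m := by nlinarith
  have h6 : 0 < 1 - 6 * ε' := by linarith
  have hee : ε * ε' ≤ ε * (1 / 16) := mul_le_mul_of_nonneg_left h3 hε.le
  have h7 : (1 + ε') ≤ (1 + ε) * (1 - 6 * ε') := by nlinarith
  have h8 : p * (1 - 6 * ε') ≤ ((1 + ε) * m) * (1 - 6 * ε') := by
    nlinarith [mul_le_mul_of_nonneg_right h7 hm]
  exact le_of_mul_le_mul_right h8 h6

lemma main_ub (μ₁ μ₂ τ : Measure ℝ) [IsProbabilityMeasure μ₁] [IsProbabilityMeasure μ₂]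
    [IsProbabilityMeasure τ]
    (hs₁ : μ₁ (Iio 0) = 0) (hs₂ : μ₂ (Iio 0) = 0) (hsτ : τ (Iio 0) = 0)
    (hL₁ : MemL μ₁) (hL₂ : MemL μ₂)
    (hpos : ∀ x, 0 < mTail τ x)
    (hcomp : ∀ ε : ℝ, 0 < ε → ∃ a : ℝ, 0 ≤ a ∧ ∀ z : ℝ,
      mTail μ₁ z ≤ (1 + ε) * mTail τ (z - a) ∧ mTail μ₂ z ≤ (1 + ε) * mTail τ (z - a))
    (hτle : ∀ x, mTail τ x ≤ mTail (mConv μ₁ μ₂) x)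
    (hS : MemS τ) :
    ∀ ε : ℝ, 0 < ε →
      ∀ᶠ x in atTop, mTail (mConv μ₁ μ₂) x ≤ (1 + ε) * (mTail μ₁ x + mTail μ₂ x) := by
  intro ε hε
  obtain ⟨ε', hε'pos, hε'le, hε'le2⟩ : ∃ ε' : ℝ, 0 < ε' ∧ ε' ≤ ε / 16 ∧ ε' ≤ 1 / 16 :=
    ⟨min (ε / 16) (1 / 16), lt_min (by linarith) (by norm_num), min_le_left _ _,
      min_le_right _ _⟩
  obtain ⟨a, ha0, hA⟩ := hcomp ε' hε'pos
  have τL : MemL τ := memL_of_memS τ hsτ hpos hS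
  -- choose t₀ ≥ 0 with mTail τ t₀ ≤ ε'
  obtain ⟨t₀, ht₀0, ht₀⟩ : ∃ t₀ : ℝ, 0 ≤ t₀ ∧ mTail τ t₀ ≤ ε' := by
    have h := ((tendsto_mTail_zero τ).eventually
      (eventually_le_nhds hε'pos)).and (eventually_ge_atTop (0:ℝ))
    obtain ⟨t₀, h1, h2⟩ := h.exists
    exact ⟨t₀, h2, h1⟩
  set h := a + t₀ with hhdef
  have hh0 : 0 ≤ h := by linarith
  have hha : h - a = t₀ := by ring
  -- eventual bounds
  have E1 := ev_memL_ub μ₁ hL₁ h hh0 hε'pos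
  have E2 := ev_memL_ub μ₂ hL₂ h hh0 hε'pos
  have E3' := ev_memS_ub τ hpos hS hε'pos
  have E3 : ∀ᶠ x in atTop,
      mTail (mConv τ τ) (x - a - a) ≤ (2 + ε') * mTail τ (x - a - a) := by
    filter_upwards [eventually_shift (-(a + a)) E3'] with x hx
    have hxx : x + -(a + a) = x - a - a := by ring
    rwa [hxx] at hx
  have E4' := ev_memL_ub τ τL (a + a) (by linarith) hε'pos
  have E4 : ∀ᶠ x in atTop, mTail τ (x - a - a) ≤ (1 + ε') * mTail τ x := by
    filter_upwards [E4'] with x hx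
    rwa [sub_sub] 
  have E5 := eventually_ge_atTop (h + a + a)
  filter_upwards [E1, E2, E3, E4, E5] with x hx1 hx2 hx3 hx4 hx5
  -- the chain
  have step1 := rc_split μ₁ μ₂ h x
  have step2 : crossR μ₁ μ₂ h h x ≤ (1 + ε') * crossR μ₁ τ h (h - a) (x - a) :=
    rc_replace₂ μ₁ μ₂ τ h h x a (1 + ε') ha0 (by linarith)
      (fun z _ => (hA z).2)
  have step3 : crossR μ₁ τ h (h - a) (x - a) ≤
      (1 + ε') * crossR τ τ (h - a) (h - a) (x - a - a) :=
    rc_replace₁ μ₁ τ τ h (h - a) (x - a) a (1 + ε') ha0 (by linarith)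
      (fun z _ => (hA z).1)
  have hhx : h - a ≤ x - a - a := by linarith
  have step4 := rc_J τ hsτ (h - a) (x - a - a) (by linarith) hhx
  have step5 : mTail (mConv τ τ) (x - a - a) ≤ (2 + ε') * mTail τ (x - a - a) := hx3
  have hrha : mTail τ (h - a) ≤ ε' := by rw [hha]; exact ht₀
  have hrx' : 0 ≤ mTail τ (x - a - a) := mTail_nonneg τ _
  have step6 : crossR τ τ (h - a) (h - a) (x - a - a) ≤ 3 * ε' * mTail τ (x - a - a) := by
    nlinarith [step4, step5, hrha, hrx', mTail_nonneg τ (h - a)]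
  have step7 : mTail τ (x - a - a) ≤ (1 + ε') * mTail (mConv μ₁ μ₂) x :=
    le_trans hx4 (by nlinarith [hτle x, hpos x])
  -- combine
  have hm1 : 0 ≤ mTail μ₁ x + mTail μ₂ x := by
    have := mTail_nonneg μ₁ x; have := mTail_nonneg μ₂ x; linarith
  have hp0 : 0 ≤ mTail (mConv μ₁ μ₂) x := mTail_nonneg _ _
  have hcross0 : 0 ≤ crossR μ₁ τ h (h - a) (x - a) := crossR_nonneg _ _ _ _ _
  have hcross1 : 0 ≤ crossR τ τ (h - a) (h - a) (x - a - a) := crossR_nonneg _ _ _ _ _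
  have hC2 : crossR τ τ (h - a) (h - a) (x - a - a) ≤
      3 * ε' * ((1 + ε') * mTail (mConv μ₁ μ₂) x) :=
    le_trans step6 (mul_le_mul_of_nonneg_left step7 (by positivity))
  have hC1 : crossR μ₁ τ h (h - a) (x - a) ≤
      (1 + ε') * (3 * ε' * ((1 + ε') * mTail (mConv μ₁ μ₂) x)) :=
    le_trans step3 (mul_le_mul_of_nonneg_left hC2 (by positivity))
  have hC0 : crossR μ₁ μ₂ h h x ≤
      (1 + ε') * ((1 + ε') * (3 * ε' * ((1 + ε') * mTail (mConv μ₁ μ₂) x))) :=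
    le_trans step2 (mul_le_mul_of_nonneg_left hC1 (by positivity))
  have hC0' : crossR μ₁ μ₂ h h x ≤ 3 * ε' * (1 + ε') ^ 3 * mTail (mConv μ₁ μ₂) x :=
    le_trans hC0 (le_of_eq (by ring))
  have total : mTail (mConv μ₁ μ₂) x ≤ (1 + ε') * (mTail μ₁ x + mTail μ₂ x) +
      3 * ε' * (1 + ε') ^ 3 * mTail (mConv μ₁ μ₂) x := by
    linarith [step1, hx1, hx2, hC0']
  exact arith_main hε hε'pos hε'le hε'le2 hm1 hp0 total

/-! Tail-equivalence transfer of `𝓢` and `𝓟𝓓`. -/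

lemma rc_replace₂' (ρ σ σ' : Measure ℝ) [IsProbabilityMeasure ρ] [IsProbabilityMeasure σ]
    [IsProbabilityMeasure σ'] (h₁ h₂ x K : ℝ) (hK : 0 ≤ K)
    (hcomp : ∀ z, h₂ ≤ z → mTail σ z ≤ K * mTail σ' z) :
    crossR ρ σ h₁ h₂ x ≤ K * crossR ρ σ' h₁ h₂ x := by
  have := rc_replace₂ ρ σ σ' h₁ h₂ x 0 K le_rfl hK (fun z hz => by
    simpa using hcomp z hz)
  simpa using this

lemma rc_replace₁' (ρ ρ' σ : Measure ℝ) [IsProbabilityMeasure ρ] [IsProbabilityMeasure ρ']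
    [IsProbabilityMeasure σ] (h₁ h₂ x K : ℝ) (hK : 0 ≤ K)
    (hcomp : ∀ z, h₁ ≤ z → mTail ρ z ≤ K * mTail ρ' z) :
    crossR ρ σ h₁ h₂ x ≤ K * crossR ρ' σ h₁ h₂ x := by
  have := rc_replace₁ ρ σ ρ' h₁ h₂ x 0 K le_rfl hK (fun z hz => by
    simpa using hcomp z hz)
  simpa using this

lemma arith_transfer {ε ε' : ℝ} (hε : 0 < ε) (h1 : 0 < ε') (h2 : ε' ≤ ε / 64)
    (h3 : ε' ≤ 1 / 64) : (1 + ε') ^ 3 * (2 + 3 * ε') ≤ 2 + ε / 2 := by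
  have hsq : ε' * ε' ≤ (1 / 64) * ε' := by nlinarith [mul_le_mul_of_nonneg_left h3 h1.le]
  have hcub : ε' * (ε' * ε') ≤ (1 / 64) * ((1 / 64) * ε') := by
    nlinarith [mul_le_mul_of_nonneg_left hsq h1.le, hsq]
  have hcube : (1 + ε') ^ 3 ≤ 1 + 4 * ε' := by nlinarith [hsq, hcub]
  have hmul := mul_le_mul_of_nonneg_right hcube (by linarith : (0:ℝ) ≤ 2 + 3 * ε')
  nlinarith [hmul, hsq, h2]

lemma transfer_S (τ σ : Measure ℝ) [IsProbabilityMeasure τ] [IsProbabilityMeasure σ]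
    (hsτ : τ (Iio 0) = 0) (hsσ : σ (Iio 0) = 0)
    (hposτ : ∀ x, 0 < mTail τ x) (hposσ : ∀ x, 0 < mTail σ x)
    (hSτ : MemS τ)
    (hcomp : ∀ ε : ℝ, 0 < ε → ∀ᶠ z in atTop,
      mTail σ z ≤ (1 + ε) * mTail τ z ∧ mTail τ z ≤ (1 + ε) * mTail σ z) :
    MemS σ := by
  have goal : Tendsto (fun x => mTail (mConv σ σ) x / mTail σ x) atTop (𝓝 2) := by
    rw [Metric.tendsto_nhds]
    intro ε hε
    -- lower bound
    have Elow : ∀ᶠ x in atTop, (2 - ε / 2) * mTail σ x ≤ mTail (mConv σ σ) x := by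
      filter_upwards [(tendsto_mTail_zero σ).eventually (eventually_le_nhds
          (by linarith : (0:ℝ) < ε / 2)), eventually_ge_atTop (0:ℝ)] with x hx1 hx2
      have := rc_lower σ hsσ x hx2
      nlinarith [mTail_nonneg σ x]
    -- upper bound
    obtain ⟨ε', hε'pos, hε'le, hε'le2⟩ : ∃ ε' : ℝ, 0 < ε' ∧ ε' ≤ ε / 64 ∧ ε' ≤ 1 / 64 :=
      ⟨min (ε / 64) (1 / 64), lt_min (by linarith) (by norm_num), min_le_left _ _,
        min_le_right _ _⟩
    have τL : MemL τ := memL_of_memS τ hsτ hposτ hSτ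
    obtain ⟨z₀, hz₀⟩ := eventually_atTop.1 (hcomp ε' hε'pos)
    obtain ⟨h, hh⟩ := (((tendsto_mTail_zero τ).eventually (eventually_le_nhds hε'pos)).and
      (eventually_ge_atTop (max z₀ 0))).exists
    have hhz₀ : z₀ ≤ h := le_trans (le_max_left _ _) hh.2
    have hh0 : 0 ≤ h := le_trans (le_max_right _ _) hh.2
    have hrτh : mTail τ h ≤ ε' := hh.1
    have Eupper : ∀ᶠ x in atTop, mTail (mConv σ σ) x ≤ (2 + ε / 2) * mTail σ x := by
      filter_upwards [ev_memS_ub τ hposτ hSτ hε'pos, eventually_ge_atTop (max h (z₀ + h)),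
        ev_memL_ub τ τL h hh0 hε'pos, eventually_ge_atTop z₀] with x hx1 hx2 hx3 hx4
      have hxh : h ≤ x := le_trans (le_max_left _ _) hx2
      have hxz : z₀ ≤ x - h := by
        have := le_trans (le_max_right _ _) hx2; linarith
      -- pieces
      have U1 := rc_split σ σ h x
      have U2 : crossR σ σ h h x ≤ (1 + ε') * crossR σ τ h h x :=
        rc_replace₂' σ σ τ h h x (1 + ε') (by linarith)
          (fun z hz => (hz₀ z (le_trans hhz₀ hz)).1)
      have U3 : crossR σ τ h h x ≤ (1 + ε') * crossR τ τ h h x :=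
        rc_replace₁' σ τ τ h h x (1 + ε') (by linarith)
          (fun z hz => (hz₀ z (le_trans hhz₀ hz)).1)
      have U4 := rc_J τ hsτ h x hh0 hxh
      have c1 : crossR τ τ h h x ≤ 3 * ε' * mTail τ x := by
        nlinarith [mTail_nonneg τ x]
      have c2 : crossR σ τ h h x ≤ (1 + ε') * (3 * ε' * mTail τ x) :=
        le_trans U3 (mul_le_mul_of_nonneg_left c1 (by linarith))
      have c3 : crossR σ σ h h x ≤ (1 + ε') * ((1 + ε') * (3 * ε' * mTail τ x)) :=
        le_trans U2 (mul_le_mul_of_nonneg_left c2 (by linarith))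
      have c4 : mTail σ (x - h) ≤ (1 + ε') * ((1 + ε') * mTail τ x) := by
        calc mTail σ (x - h) ≤ (1 + ε') * mTail τ (x - h) := (hz₀ (x - h) hxz).1
          _ ≤ (1 + ε') * ((1 + ε') * mTail τ x) :=
              mul_le_mul_of_nonneg_left hx3 (by linarith)
      have c5 : mTail τ x ≤ (1 + ε') * mTail σ x := (hz₀ x hx4).2
      have e1 : mTail (mConv σ σ) x ≤ (1 + ε') ^ 2 * (2 + 3 * ε') * mTail τ x := by
        nlinarith [U1, c3, c4]
      have e2 : (1 + ε') ^ 2 * (2 + 3 * ε') * mTail τ x ≤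
          (1 + ε') ^ 2 * (2 + 3 * ε') * ((1 + ε') * mTail σ x) :=
        mul_le_mul_of_nonneg_left c5 (by positivity)
      have e3 : mTail (mConv σ σ) x ≤ (1 + ε') ^ 3 * (2 + 3 * ε') * mTail σ x :=
        le_trans e1 (le_trans e2 (le_of_eq (by ring)))
      exact le_trans e3 (mul_le_mul_of_nonneg_right
        (arith_transfer hε hε'pos hε'le hε'le2) (mTail_nonneg σ x))
    filter_upwards [Elow, Eupper] with x h1 h2
    rw [Real.dist_eq, abs_lt]
    have hq := hposσ x
    constructor
    · have : 2 - ε / 2 ≤ mTail (mConv σ σ) x / mTail σ x := (le_div_iff₀ hq).2 (by linarith)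
      linarith
    · have : mTail (mConv σ σ) x / mTail σ x ≤ 2 + ε / 2 := (div_le_iff₀ hq).2 h2
      linarith
  exact goal

lemma transfer_PD (τ σ : Measure ℝ)
    (hposτ : ∀ x, 0 < mTail τ x) (hposσ : ∀ x, 0 < mTail σ x) (hPD : MemPD τ)
    (hcomp : ∀ ε : ℝ, 0 < ε → ∀ᶠ z in atTop,
      mTail σ z ≤ (1 + ε) * mTail τ z ∧ mTail τ z ≤ (1 + ε) * mTail σ z) :
    MemPD σ := by
  intro b hb
  obtain ⟨c, hc1, hev⟩ := hPD b hb
  have hc0 : 0 < c := by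
    obtain ⟨x, hx1⟩ := hev.exists
    exact lt_of_lt_of_le (div_pos (hposτ (b * x)) (hposτ x)) hx1
  obtain ⟨ε, hεpos, hε1, hε2⟩ : ∃ ε : ℝ, 0 < ε ∧ ε ≤ 1 ∧ ε ≤ (1 - c) / (4 * c) :=
    ⟨min 1 ((1 - c) / (4 * c)), lt_min one_pos (div_pos (by linarith) (by linarith)),
      min_le_left _ _, min_le_right _ _⟩
  refine ⟨(c + 3) / 4, by linarith, ?_⟩
  have hbx : Tendsto (fun x : ℝ => b * x) atTop atTop :=
    Tendsto.const_mul_atTop (by linarith) tendsto_id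
  filter_upwards [hbx.eventually (hcomp ε hεpos), hcomp ε hεpos, hev,
    eventually_gt_atTop 0] with x hx1 hx2 hx3 hx4
  have hτbx : mTail τ (b * x) ≤ c * mTail τ x := by
    rw [div_le_iff₀ (hposτ x)] at hx3; linarith
  have hchain : mTail σ (b * x) ≤ (1 + ε) * ((1 + ε) * c) * mTail σ x := by
    calc mTail σ (b * x) ≤ (1 + ε) * mTail τ (b * x) := hx1.1
      _ ≤ (1 + ε) * (c * mTail τ x) := mul_le_mul_of_nonneg_left hτbx (by linarith)
      _ ≤ (1 + ε) * (c * ((1 + ε) * mTail σ x)) := by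
          have := mul_le_mul_of_nonneg_left hx2.2 hc0.le
          exact mul_le_mul_of_nonneg_left this (by linarith)
      _ = (1 + ε) * ((1 + ε) * c) * mTail σ x := by ring
  have hcoef : (1 + ε) * ((1 + ε) * c) ≤ (c + 3) / 4 := by
    rw [le_div_iff₀ (by linarith : (0:ℝ) < 4 * c)] at hε2
    nlinarith [hεpos, hc0, hε1, hε2]
  rw [div_le_iff₀ (hposσ x)]
  calc mTail σ (b * x) ≤ (1 + ε) * ((1 + ε) * c) * mTail σ x := hchain
    _ ≤ (c + 3) / 4 * mTail σ x := mul_le_mul_of_nonneg_right hcoef (mTail_nonneg σ x)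

/-! Core equivalence. -/

lemma mConv_supp (μ₁ μ₂ : Measure ℝ) [IsProbabilityMeasure μ₁] [IsProbabilityMeasure μ₂]
    (hs₁ : μ₁ (Iio 0) = 0) (hs₂ : μ₂ (Iio 0) = 0) : (mConv μ₁ μ₂) (Iio 0) = 0 := by
  rw [mConv, Measure.map_apply (f := fun p : ℝ × ℝ => p.1 + p.2) (measurable_fst.add measurable_snd) measurableSet_Iio]
  have hsub : (fun p : ℝ × ℝ => p.1 + p.2) ⁻¹' (Iio 0) ⊆
      (Iio 0 ×ˢ univ) ∪ (univ ×ˢ Iio 0) := by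
    rintro ⟨u, v⟩ huv
    simp only [mem_preimage, mem_Iio] at huv
    by_cases h : u < 0
    · exact Or.inl ⟨h, trivial⟩
    · push_neg at h
      exact Or.inr ⟨trivial, show v < 0 by linarith⟩
  refine measure_mono_null hsub (measure_union_null ?_ ?_) <;>
    rw [Measure.prod_prod] <;> simp [hs₁, hs₂]

/-- From `MemS τ` for a comparison measure `τ`, the eventual two-sided tail equivalence of
`ν` and `mConv μ₁ μ₂`. -/
lemma qp_equiv (μ₁ μ₂ ν τ : Measure ℝ) [IsProbabilityMeasure μ₁] [IsProbabilityMeasure μ₂]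
    [IsProbabilityMeasure ν] [IsProbabilityMeasure τ]
    (hs₁ : μ₁ (Iio 0) = 0) (hs₂ : μ₂ (Iio 0) = 0) (hsτ : τ (Iio 0) = 0)
    (hL₁ : MemL μ₁) (hL₂ : MemL μ₂)
    (hposτ : ∀ x, 0 < mTail τ x)
    (hτcomp : ∀ ε : ℝ, 0 < ε → ∃ a : ℝ, 0 ≤ a ∧ ∀ z : ℝ,
      mTail μ₁ z ≤ (1 + ε) * mTail τ (z - a) ∧ mTail μ₂ z ≤ (1 + ε) * mTail τ (z - a))
    (hτle : ∀ x, mTail τ x ≤ mTail (mConv μ₁ μ₂) x)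
    (hSτ : MemS τ)
    (hq_le_p : ∀ x, mTail ν x ≤ mTail (mConv μ₁ μ₂) x)
    (hlow : ∀ ε : ℝ, 0 < ε → ∃ a : ℝ, 0 ≤ a ∧ ∀ᶠ x in atTop,
      (1 - ε) * (mTail μ₁ x + mTail μ₂ x) ≤ mTail ν (x - a)) :
    ∀ ε : ℝ, 0 < ε → ∀ᶠ z in atTop,
      mTail ν z ≤ (1 + ε) * mTail (mConv μ₁ μ₂) z ∧
        mTail (mConv μ₁ μ₂) z ≤ (1 + ε) * mTail ν z := by
  have hpm := main_ub μ₁ μ₂ τ hs₁ hs₂ hsτ hL₁ hL₂ hposτ hτcomp hτle hSτ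
  -- key: for every δ' > 0, eventually (1 - δ') p ≤ q
  have hQ : ∀ δ' : ℝ, 0 < δ' → ∀ᶠ y in atTop,
      (1 - δ') * mTail (mConv μ₁ μ₂) y ≤ mTail ν y := by
    intro δ' hδ'
    obtain ⟨δ, hδpos, hδ1, hδ2⟩ : ∃ δ : ℝ, 0 < δ ∧ δ ≤ δ' / 4 ∧ δ ≤ 1 / 4 :=
      ⟨min (δ' / 4) (1 / 4), lt_min (by linarith) (by norm_num), min_le_left _ _,
        min_le_right _ _⟩
    obtain ⟨a, ha0, hlowev⟩ := hlow δ hδpos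
    have E1 : ∀ᶠ y in atTop,
        (1 - δ) * (mTail μ₁ (y + a) + mTail μ₂ (y + a)) ≤ mTail ν y := by
      filter_upwards [eventually_shift a hlowev] with y hy
      have h2 : y + a - a = y := by ring
      rwa [h2] at hy
    have E2 := ev_memL_lb μ₁ hL₁ a ha0 hδpos
    have E3 := ev_memL_lb μ₂ hL₂ a ha0 hδpos
    have E4 := hpm δ hδpos
    filter_upwards [E1, E2, E3, E4] with y hy1 hy2 hy3 hy4
    rcases le_or_gt 1 δ' with hone | hone
    · have h0 : (1 - δ') * mTail (mConv μ₁ μ₂) y ≤ 0 :=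
        mul_nonpos_of_nonpos_of_nonneg (by linarith) (mTail_nonneg _ _)
      exact le_trans h0 (mTail_nonneg _ _)
    · -- positive factor case
      set m' := mTail μ₁ (y + a) + mTail μ₂ (y + a) with hm'
      have hm'0 : 0 ≤ m' := by
        have := mTail_nonneg μ₁ (y + a); have := mTail_nonneg μ₂ (y + a); linarith
      have hm : mTail μ₁ y + mTail μ₂ y ≤ (1 + δ) * m' := by
        rw [hm']; ring_nf; ring_nf at hy2 hy3; linarith
      have hp : mTail (mConv μ₁ μ₂) y ≤ (1 + δ) * ((1 + δ) * m') :=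
        le_trans hy4 (by nlinarith [hm])
      have hcoef : (1 - δ') * ((1 + δ) * (1 + δ)) ≤ 1 - δ := by
        nlinarith [mul_le_mul_of_nonneg_left hδ2 hδpos.le, mul_nonneg hδpos.le hδ'.le,
          mul_nonneg (mul_nonneg hδ'.le hδpos.le) hδpos.le, hδ1]
      calc (1 - δ') * mTail (mConv μ₁ μ₂) y ≤ (1 - δ') * ((1 + δ) * ((1 + δ) * m')) :=
            mul_le_mul_of_nonneg_left hp (by linarith)
        _ ≤ (1 - δ) * m' := by nlinarith [mul_le_mul_of_nonneg_right hcoef hm'0]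
        _ ≤ mTail ν y := hy1
  -- conclude the two-sided bound
  intro ε hε
  obtain ⟨δ', hδ'pos, hδ'1, hδ'2⟩ : ∃ δ' : ℝ, 0 < δ' ∧ δ' ≤ ε / 2 ∧ δ' ≤ 1 / 2 :=
    ⟨min (ε / 2) (1 / 2), lt_min (by linarith) (by norm_num), min_le_left _ _,
      min_le_right _ _⟩
  filter_upwards [hQ δ' hδ'pos] with z hz
  constructor
  · have h1 := hq_le_p z
    nlinarith [mTail_nonneg (mConv μ₁ μ₂) z]
  · have h2 := mul_le_mul_of_nonneg_left hz (by linarith : (0:ℝ) ≤ 1 + ε)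
    have hp0 : 0 ≤ mTail (mConv μ₁ μ₂) z := mTail_nonneg _ _
    have hc : 0 ≤ ε - δ' - ε * δ' := by
      nlinarith [mul_le_mul_of_nonneg_left hδ'2 hε.le]
    nlinarith [h2, mul_nonneg hc hp0]

lemma core_iff (μ₁ μ₂ ν : Measure ℝ) [IsProbabilityMeasure μ₁] [IsProbabilityMeasure μ₂]
    [IsProbabilityMeasure ν] [IsProbabilityMeasure (mConv μ₁ μ₂)]
    (hs₁ : μ₁ (Iio 0) = 0) (hs₂ : μ₂ (Iio 0) = 0) (hsν : ν (Iio 0) = 0)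
    (hL₁ : MemL μ₁) (hL₂ : MemL μ₂)
    (hq_le_p : ∀ x, mTail ν x ≤ mTail (mConv μ₁ μ₂) x)
    (hcomp : ∀ ε : ℝ, 0 < ε → ∃ a : ℝ, 0 ≤ a ∧ ∀ z : ℝ,
      mTail μ₁ z ≤ (1 + ε) * mTail ν (z - a) ∧ mTail μ₂ z ≤ (1 + ε) * mTail ν (z - a))
    (hlow : ∀ ε : ℝ, 0 < ε → ∃ a : ℝ, 0 ≤ a ∧ ∀ᶠ x in atTop,
      (1 - ε) * (mTail μ₁ x + mTail μ₂ x) ≤ mTail ν (x - a)) :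
    MemA (mConv μ₁ μ₂) ↔ MemA ν := by
  have hsμ : (mConv μ₁ μ₂) (Iio 0) = 0 := mConv_supp μ₁ μ₂ hs₁ hs₂
  have hpos₁ : ∀ x, 0 < mTail μ₁ x := mTail_pos_of_memL μ₁ hL₁
  have hposμ : ∀ x, 0 < mTail (mConv μ₁ μ₂) x := fun x =>
    lt_of_lt_of_le (hpos₁ x) (rc_single₁ μ₁ μ₂ hs₂ x)
  have hposν : ∀ x, 0 < mTail ν x := by
    intro x
    obtain ⟨a, ha0, hA⟩ := hcomp 1 one_pos
    have h1 := (hA (x + a)).1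
    have hxa : x + a - a = x := by ring
    rw [hxa] at h1
    nlinarith [hpos₁ (x + a), mTail_nonneg ν x]
  -- trivial comparison of μ₁, μ₂ with the convolution itself
  have hμcomp : ∀ ε : ℝ, 0 < ε → ∃ a : ℝ, 0 ≤ a ∧ ∀ z : ℝ,
      mTail μ₁ z ≤ (1 + ε) * mTail (mConv μ₁ μ₂) (z - a) ∧
        mTail μ₂ z ≤ (1 + ε) * mTail (mConv μ₁ μ₂) (z - a) := by
    intro ε hε
    refine ⟨0, le_rfl, fun z => ⟨?_, ?_⟩⟩
    · rw [sub_zero]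
      nlinarith [rc_single₁ μ₁ μ₂ hs₂ z, mTail_nonneg (mConv μ₁ μ₂) z]
    · rw [sub_zero]
      nlinarith [rc_single₂ μ₁ μ₂ hs₁ z, mTail_nonneg (mConv μ₁ μ₂) z]
  constructor
  · rintro ⟨hSμ, hPDμ⟩
    have hcomp2 := qp_equiv μ₁ μ₂ ν (mConv μ₁ μ₂) hs₁ hs₂ hsμ hL₁ hL₂ hposμ hμcomp
      (fun x => le_rfl) hSμ hq_le_p hlow
    exact ⟨transfer_S (mConv μ₁ μ₂) ν hsμ hsν hposμ hposν hSμ hcomp2,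
      transfer_PD (mConv μ₁ μ₂) ν hposμ hposν hPDμ hcomp2⟩
  · rintro ⟨hSν, hPDν⟩
    have hcomp2 := qp_equiv μ₁ μ₂ ν ν hs₁ hs₂ hsν hL₁ hL₂ hposν hcomp hq_le_p hSν
      hq_le_p hlow
    -- flip the two-sided bound
    have hcomp2' : ∀ ε : ℝ, 0 < ε → ∀ᶠ z in atTop,
        mTail (mConv μ₁ μ₂) z ≤ (1 + ε) * mTail ν z ∧
          mTail ν z ≤ (1 + ε) * mTail (mConv μ₁ μ₂) z := by
      intro ε hε
      filter_upwards [hcomp2 ε hε] with z hz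
      exact ⟨hz.2, hz.1⟩
    exact ⟨transfer_S ν (mConv μ₁ μ₂) hsν hsμ hposν hposμ hSν hcomp2',
      transfer_PD ν (mConv μ₁ μ₂) hposν hposμ hPDν hcomp2'⟩

/-! Geometry of the gauge `suprA`. -/

section Geometry
variable {A : Set (Fin d → ℝ)}

lemma suprA_bddAbove (hA : IsRSet d A) (z : Fin d → ℝ) :
    BddAbove {u : ℝ | 0 < u ∧ z ∈ u • A} := by
  obtain ⟨δ, hδpos, hδ⟩ : ∃ δ > 0, ∀ y ∈ A, δ ≤ ‖y‖ := by
    by_contra hcon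
    push_neg at hcon
    refine hA.zero_notMem_closure (Metric.mem_closure_iff.2 fun ε hε => ?_)
    obtain ⟨y, hyA, hy⟩ := hcon ε hε
    exact ⟨y, hyA, by rwa [dist_zero_left]⟩
  refine ⟨‖z‖ / δ, fun u hu => ?_⟩
  obtain ⟨hu0, huA⟩ := hu
  rw [mem_smul_set_iff_inv_smul_mem₀ (ne_of_gt hu0)] at huA
  have h1 := hδ _ huA
  rw [norm_smul, Real.norm_eq_abs, abs_of_pos (inv_pos.2 hu0)] at h1
  have h2 : u * δ ≤ u * (u⁻¹ * ‖z‖) := mul_le_mul_of_nonneg_left h1 hu0.le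
  rw [← mul_assoc, mul_inv_cancel₀ (ne_of_gt hu0), one_mul] at h2
  exact (le_div_iff₀ hδpos).2 h2

lemma suprA_nonneg (A : Set (Fin d → ℝ)) (z : Fin d → ℝ) : 0 ≤ suprA A z := by
  apply Real.sSup_nonneg
  rintro x ⟨hx, _⟩
  exact hx.le

lemma zero_mem_compl (hA : IsRSet d A) : (0 : Fin d → ℝ) ∈ Aᶜ :=
  fun h => hA.zero_notMem_closure (subset_closure h)

lemma mem_smul_of_le (hA : IsRSet d A) {z : Fin d → ℝ} {u u' : ℝ}
    (huA : z ∈ u • A) (h0 : 0 < u') (hle : u' ≤ u) : z ∈ u' • A := by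
  have hu0 : 0 < u := lt_of_lt_of_le h0 hle
  rw [mem_smul_set_iff_inv_smul_mem₀ (ne_of_gt hu0)] at huA
  rw [mem_smul_set_iff_inv_smul_mem₀ (ne_of_gt h0)]
  by_contra hmem
  have hconv := hA.convex_compl (mem_compl hmem) (zero_mem_compl hA)
    (by positivity : (0:ℝ) ≤ u' / u)
    (by
      have : u' / u ≤ 1 := (div_le_one hu0).2 hle
      linarith : (0:ℝ) ≤ 1 - u' / u) (by ring)
  have heq : (u' / u) • (u'⁻¹ • z) + (1 - u' / u) • (0 : Fin d → ℝ) = u⁻¹ • z := by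
    rw [smul_smul, smul_zero, add_zero]
    congr 1
    field_simp
    try ring
  rw [heq] at hconv
  exact hconv huA

lemma le_suprA (hA : IsRSet d A) {z : Fin d → ℝ} {u : ℝ} (h0 : 0 < u) (huA : z ∈ u • A) :
    u ≤ suprA A z :=
  le_csSup (suprA_bddAbove hA z) ⟨h0, huA⟩

lemma exists_of_lt_suprA (hA : IsRSet d A) {z : Fin d → ℝ} {x : ℝ} (hx : 0 ≤ x)
    (h : x < suprA A z) : ∃ u, x < u ∧ 0 < u ∧ z ∈ u • A := by
  have hne : {u : ℝ | 0 < u ∧ z ∈ u • A}.Nonempty := by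
    by_contra h'
    rw [not_nonempty_iff_eq_empty] at h'
    rw [suprA, h', Real.sSup_empty] at h
    linarith
  obtain ⟨b, hb, hxb⟩ := (lt_csSup_iff (suprA_bddAbove hA z) hne).1 h
  exact ⟨b, hxb, hb.1, hb.2⟩

lemma suprA_subadd (hA : IsRSet d A) (z w : Fin d → ℝ) :
    suprA A (z + w) ≤ suprA A z + suprA A w := by
  by_contra hlt
  push_neg at hlt
  have hx0 : 0 ≤ suprA A z + suprA A w :=
    add_nonneg (suprA_nonneg A z) (suprA_nonneg A w)
  obtain ⟨u, hu, hu0, huA⟩ := exists_of_lt_suprA hA hx0 hlt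
  set δ := (u - suprA A z - suprA A w) / 2 with hδdef
  have hδpos : 0 < δ := by rw [hδdef]; linarith
  set a := suprA A z + δ with hadef
  set b := suprA A w + δ with hbdef
  have ha0 : 0 < a := by rw [hadef]; linarith [suprA_nonneg A z]
  have hb0 : 0 < b := by rw [hbdef]; linarith [suprA_nonneg A w]
  have hab : a + b = u := by rw [hadef, hbdef, hδdef]; ring
  have hza : z ∉ a • A := fun hmem => absurd (le_suprA hA ha0 hmem) (by
    rw [hadef]; linarith)
  have hwb : w ∉ b • A := fun hmem => absurd (le_suprA hA hb0 hmem) (by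
    rw [hbdef]; linarith)
  have hz' : a⁻¹ • z ∈ Aᶜ := by
    intro h
    exact hza ((mem_smul_set_iff_inv_smul_mem₀ (ne_of_gt ha0) _ _).2 h)
  have hw' : b⁻¹ • w ∈ Aᶜ := by
    intro h
    exact hwb ((mem_smul_set_iff_inv_smul_mem₀ (ne_of_gt hb0) _ _).2 h)
  have hconv := hA.convex_compl hz' hw' (by positivity : (0:ℝ) ≤ a / u)
    (by positivity : (0:ℝ) ≤ b / u) (by rw [← add_div, hab, div_self (ne_of_gt hu0)])
  have heq : (a / u) • (a⁻¹ • z) + (b / u) • (b⁻¹ • w) = u⁻¹ • (z + w) := by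
    rw [smul_smul, smul_smul, smul_add]
    congr 1 <;> · congr 1; field_simp; try ring
  rw [heq] at hconv
  exact hconv ((mem_smul_set_iff_inv_smul_mem₀ (ne_of_gt hu0) _ _).1 huA)

lemma suprA_measurable (hA : IsRSet d A) : Measurable (suprA A) := by
  have hls : LowerSemicontinuous (suprA A) := by
    rw [lowerSemicontinuous_iff_isOpen_preimage]
    intro y
    rcases lt_or_ge y 0 with hy | hy
    · have : suprA A ⁻¹' Ioi y = univ := by
        ext z
        simp only [mem_preimage, mem_Ioi, mem_univ, iff_true]
        exact lt_of_lt_of_le hy (suprA_nonneg A z)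
      rw [this]; exact isOpen_univ
    · have hset : suprA A ⁻¹' Ioi y = ⋃ (q : ℚ), ⋃ (_ : y < (q : ℝ)), ((q : ℝ) • A) := by
        ext z
        simp only [mem_preimage, mem_Ioi, mem_iUnion]
        constructor
        · intro h
          obtain ⟨u, hu, hu0, huA⟩ := exists_of_lt_suprA hA hy h
          obtain ⟨q, hq1, hq2⟩ := exists_rat_btwn hu
          have hq0 : 0 < (q : ℝ) := lt_of_le_of_lt hy hq1
          exact ⟨q, hq1, mem_smul_of_le hA huA hq0 hq2.le⟩
        · rintro ⟨q, hq, hmem⟩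
          have hq0 : 0 < (q : ℝ) := lt_of_le_of_lt hy hq
          exact lt_of_lt_of_le hq (le_suprA hA hq0 hmem)
      rw [hset]
      exact isOpen_iUnion fun q => isOpen_iUnion fun hq =>
        hA.isOpen.smul₀ (ne_of_gt (lt_of_le_of_lt hy hq))
  exact hls.measurable

end Geometry

end Aux

open Set

/-- For independent `X⁽¹⁾, X⁽²⁾` with distributions in `𝓣_A`:
`F_A⁽¹⁾ * F_A⁽²⁾ ∈ 𝓐` if and only if `F₁ * F₂ ∈ 𝓐_A`. -/
theorem statement5 (P : Measure Ω) [IsProbabilityMeasure P]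
    (A : Set (Fin d → ℝ)) (hA : IsRSet d A)
    (X₁ X₂ : Ω → Fin d → ℝ) (hX₁ : Measurable X₁) (hX₂ : Measurable X₂)
    (hind : IndepFun X₁ X₂ P)
    (h₁ : MemT (FA P A X₁)) (h₂ : MemT (FA P A X₂)) :
    MemA (mConv (FA P A X₁) (FA P A X₂)) ↔ MemA (FA P A fun ω => X₁ ω + X₂ ω) := by
  classical
  have hsm : Measurable (suprA A) := suprA_measurable hA
  set Y₁ : Ω → ℝ := fun ω => suprA A (X₁ ω) with hY₁def
  set Y₂ : Ω → ℝ := fun ω => suprA A (X₂ ω) with hY₂def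
  set T : Ω → ℝ := fun ω => suprA A (X₁ ω + X₂ ω) with hTdef
  set R₁ : Ω → ℝ := fun ω => suprA A (-(X₁ ω)) with hR₁def
  set R₂ : Ω → ℝ := fun ω => suprA A (-(X₂ ω)) with hR₂def
  have hY₁m : Measurable Y₁ := hsm.comp hX₁
  have hY₂m : Measurable Y₂ := hsm.comp hX₂
  have hTm : Measurable T := hsm.comp (hX₁.add hX₂)
  have hR₁m : Measurable R₁ := hsm.comp hX₁.neg
  have hR₂m : Measurable R₂ := hsm.comp hX₂.neg
  -- identifications of the measures as laws
  have hμ₁ : FA P A X₁ = P.map Y₁ := rfl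
  have hμ₂ : FA P A X₂ = P.map Y₂ := rfl
  have hν : (FA P A fun ω => X₁ ω + X₂ ω) = P.map T := rfl
  haveI i₁ : IsProbabilityMeasure (FA P A X₁) := by
    rw [hμ₁]; exact Measure.isProbabilityMeasure_map hY₁m.aemeasurable
  haveI i₂ : IsProbabilityMeasure (FA P A X₂) := by
    rw [hμ₂]; exact Measure.isProbabilityMeasure_map hY₂m.aemeasurable
  haveI iν : IsProbabilityMeasure (FA P A fun ω => X₁ ω + X₂ ω) := by
    rw [hν]; exact Measure.isProbabilityMeasure_map hTm.aemeasurable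
  haveI iμ : IsProbabilityMeasure (mConv (FA P A X₁) (FA P A X₂)) := by
    show IsProbabilityMeasure (((FA P A X₁).prod (FA P A X₂)).map fun p => p.1 + p.2)
    exact Measure.isProbabilityMeasure_map (measurable_fst.add measurable_snd).aemeasurable
  -- tail formulas
  have tail₁ : ∀ x, mTail (FA P A X₁) x = (P (Y₁ ⁻¹' Ioi x)).toReal := by
    intro x
    rw [hμ₁, mTail, Measure.map_apply hY₁m measurableSet_Ioi]
  have tail₂ : ∀ x, mTail (FA P A X₂) x = (P (Y₂ ⁻¹' Ioi x)).toReal := by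
    intro x
    rw [hμ₂, mTail, Measure.map_apply hY₂m measurableSet_Ioi]
  have tailν : ∀ x, mTail (FA P A fun ω => X₁ ω + X₂ ω) x = (P (T ⁻¹' Ioi x)).toReal := by
    intro x
    rw [hν, mTail, Measure.map_apply hTm measurableSet_Ioi]
  -- the convolution is the law of the sum
  have hYind : IndepFun Y₁ Y₂ P := hind.comp hsm hsm
  have hconv_eq : mConv (FA P A X₁) (FA P A X₂) = P.map (fun ω => Y₁ ω + Y₂ ω) := by
    have hprod : P.map (fun ω => (Y₁ ω, Y₂ ω)) = (P.map Y₁).prod (P.map Y₂) :=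
      (indepFun_iff_map_prod_eq_prod_map_map hY₁m.aemeasurable hY₂m.aemeasurable).1 hYind
    rw [hμ₁, hμ₂]
    show ((P.map Y₁).prod (P.map Y₂)).map (fun p : ℝ × ℝ => p.1 + p.2) = _
    rw [← hprod, Measure.map_map (g := fun p : ℝ × ℝ => p.1 + p.2) (measurable_fst.add measurable_snd) (hY₁m.prodMk hY₂m)]
    rfl
  have tailμ : ∀ x, mTail (mConv (FA P A X₁) (FA P A X₂)) x =
      (P ((fun ω => Y₁ ω + Y₂ ω) ⁻¹' Ioi x)).toReal := by
    intro x
    rw [hconv_eq, mTail, Measure.map_apply (f := fun ω => Y₁ ω + Y₂ ω) (hY₁m.add hY₂m) measurableSet_Ioi]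
  -- pointwise inequalities
  have hTle : ∀ ω, T ω ≤ Y₁ ω + Y₂ ω := fun ω => suprA_subadd hA (X₁ ω) (X₂ ω)
  have hY₁le : ∀ ω, Y₁ ω ≤ T ω + R₂ ω := by
    intro ω
    have harg : X₁ ω = (X₁ ω + X₂ ω) + -(X₂ ω) := by abel
    calc Y₁ ω = suprA A ((X₁ ω + X₂ ω) + -(X₂ ω)) := by rw [hY₁def, ← harg]
      _ ≤ T ω + R₂ ω := suprA_subadd hA _ _
  have hY₂le : ∀ ω, Y₂ ω ≤ T ω + R₁ ω := by
    intro ω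
    have harg : X₂ ω = (X₁ ω + X₂ ω) + -(X₁ ω) := by abel
    calc Y₂ ω = suprA A ((X₁ ω + X₂ ω) + -(X₁ ω)) := by rw [hY₂def, ← harg]
      _ ≤ T ω + R₁ ω := suprA_subadd hA _ _
  -- independence of the relevant pairs
  have hY₁R₂ : IndepFun Y₁ R₂ P := hind.comp hsm (hsm.comp measurable_neg)
  have hY₂R₁ : IndepFun Y₂ R₁ P := (hind.symm).comp hsm (hsm.comp measurable_neg)
  -- the tendsto facts for R₁, R₂
  have hRtend : ∀ (R : Ω → ℝ), Measurable R →
      Tendsto (fun a : ℝ => (P (R ⁻¹' Iic a)).toReal) atTop (𝓝 1) := by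
    intro R hRm
    have hmono : Monotone (fun a : ℝ => R ⁻¹' Iic a) := fun a b hab ω h =>
      le_trans h hab
    have hun := tendsto_measure_iUnion_atTop (μ := P) hmono
    have hunion : ⋃ a : ℝ, R ⁻¹' Iic a = univ := by
      ext ω
      simp only [mem_iUnion, mem_preimage, mem_Iic, mem_univ, iff_true]
      exact ⟨R ω, le_rfl⟩
    rw [hunion, measure_univ] at hun
    have := (ENNReal.tendsto_toReal ENNReal.one_ne_top).comp hun
    exact this
  -- support conditions
  have hs₁ : (FA P A X₁) (Iio 0) = 0 := by
    rw [hμ₁, Measure.map_apply hY₁m measurableSet_Iio]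
    have : Y₁ ⁻¹' Iio 0 = ∅ := by
      ext ω
      simp only [mem_preimage, mem_Iio, mem_empty_iff_false, iff_false, not_lt]
      exact suprA_nonneg A _
    rw [this, measure_empty]
  have hs₂ : (FA P A X₂) (Iio 0) = 0 := by
    rw [hμ₂, Measure.map_apply hY₂m measurableSet_Iio]
    have : Y₂ ⁻¹' Iio 0 = ∅ := by
      ext ω
      simp only [mem_preimage, mem_Iio, mem_empty_iff_false, iff_false, not_lt]
      exact suprA_nonneg A _
    rw [this, measure_empty]
  have hsν : (FA P A fun ω => X₁ ω + X₂ ω) (Iio 0) = 0 := by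
    rw [hν, Measure.map_apply hTm measurableSet_Iio]
    have : T ⁻¹' Iio 0 = ∅ := by
      ext ω
      simp only [mem_preimage, mem_Iio, mem_empty_iff_false, iff_false, not_lt]
      exact suprA_nonneg A _
    rw [this, measure_empty]
  -- (A3) : q ≤ p
  have hq_le_p : ∀ x, mTail (FA P A fun ω => X₁ ω + X₂ ω) x ≤
      mTail (mConv (FA P A X₁) (FA P A X₂)) x := by
    intro x
    rw [tailν, tailμ]
    refine ENNReal.toReal_mono (measure_ne_top _ _) (measure_mono ?_)
    intro ω hω
    simp only [mem_preimage, mem_Ioi] at hω ⊢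
    exact lt_of_lt_of_le hω (hTle ω)
  -- (A4) : hcomp
  have hcomp : ∀ ε : ℝ, 0 < ε → ∃ a : ℝ, 0 ≤ a ∧ ∀ z : ℝ,
      mTail (FA P A X₁) z ≤ (1 + ε) * mTail (FA P A fun ω => X₁ ω + X₂ ω) (z - a) ∧
      mTail (FA P A X₂) z ≤ (1 + ε) * mTail (FA P A fun ω => X₁ ω + X₂ ω) (z - a) := by
    intro ε hε
    have hc1 : (1 : ℝ) / (1 + ε) < 1 := by
      rw [div_lt_one (by linarith)]; linarith
    obtain ⟨a, ha⟩ := (((hRtend R₂ hR₂m).eventually (eventually_ge_nhds hc1)).and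
      (((hRtend R₁ hR₁m).eventually (eventually_ge_nhds hc1)).and
        (eventually_ge_atTop (0:ℝ)))).exists
    obtain ⟨hβ₂, hβ₁, ha0⟩ := ha
    refine ⟨a, ha0, fun z => ⟨?_, ?_⟩⟩
    · -- event inclusion and independence for Y₁, R₂
      have hincl : Y₁ ⁻¹' Ioi z ∩ R₂ ⁻¹' Iic a ⊆ T ⁻¹' Ioi (z - a) := by
        rintro ω ⟨h1, h2⟩
        simp only [mem_preimage, mem_Ioi, mem_Iic] at h1 h2 ⊢
        have := hY₁le ω
        linarith
      have hind1 := hY₁R₂.measure_inter_preimage_eq_mul (Ioi z) (Iic a)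
        measurableSet_Ioi measurableSet_Iic
      have hmeas : (P (T ⁻¹' Ioi (z - a))).toReal ≥
          (P (Y₁ ⁻¹' Ioi z)).toReal * (P (R₂ ⁻¹' Iic a)).toReal := by
        rw [← ENNReal.toReal_mul, ← hind1]
        exact ENNReal.toReal_mono (measure_ne_top _ _) (measure_mono hincl)
      rw [tail₁, tailν]
      have h0 : (0:ℝ) ≤ (P (Y₁ ⁻¹' Ioi z)).toReal := ENNReal.toReal_nonneg
      have hβ : (P (R₂ ⁻¹' Iic a)).toReal ≥ 1 / (1 + ε) := hβ₂
      have hstep := mul_le_mul_of_nonneg_left hβ h0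
      have h2 : (P (Y₁ ⁻¹' Ioi z)).toReal * (1 / (1 + ε)) ≤ (P (T ⁻¹' Ioi (z - a))).toReal :=
        le_trans hstep hmeas
      rw [← sub_nonneg]
      have hpos : (0:ℝ) < 1 + ε := by linarith
      have := mul_le_mul_of_nonneg_left h2 hpos.le
      calc (0:ℝ) ≤ (1 + ε) * (P (T ⁻¹' Ioi (z - a))).toReal -
            (1 + ε) * ((P (Y₁ ⁻¹' Ioi z)).toReal * (1 / (1 + ε))) := by linarith
        _ = (1 + ε) * (P (T ⁻¹' Ioi (z - a))).toReal - (P (Y₁ ⁻¹' Ioi z)).toReal := by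
            field_simp
    · have hincl : Y₂ ⁻¹' Ioi z ∩ R₁ ⁻¹' Iic a ⊆ T ⁻¹' Ioi (z - a) := by
        rintro ω ⟨h1, h2⟩
        simp only [mem_preimage, mem_Ioi, mem_Iic] at h1 h2 ⊢
        have := hY₂le ω
        linarith
      have hind1 := hY₂R₁.measure_inter_preimage_eq_mul (Ioi z) (Iic a)
        measurableSet_Ioi measurableSet_Iic
      have hmeas : (P (T ⁻¹' Ioi (z - a))).toReal ≥
          (P (Y₂ ⁻¹' Ioi z)).toReal * (P (R₁ ⁻¹' Iic a)).toReal := by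
        rw [← ENNReal.toReal_mul, ← hind1]
        exact ENNReal.toReal_mono (measure_ne_top _ _) (measure_mono hincl)
      rw [tail₂, tailν]
      have h0 : (0:ℝ) ≤ (P (Y₂ ⁻¹' Ioi z)).toReal := ENNReal.toReal_nonneg
      have hβ : (P (R₁ ⁻¹' Iic a)).toReal ≥ 1 / (1 + ε) := hβ₁
      have hstep := mul_le_mul_of_nonneg_left hβ h0
      have h2 : (P (Y₂ ⁻¹' Ioi z)).toReal * (1 / (1 + ε)) ≤ (P (T ⁻¹' Ioi (z - a))).toReal :=
        le_trans hstep hmeas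
      rw [← sub_nonneg]
      have hpos : (0:ℝ) < 1 + ε := by linarith
      have := mul_le_mul_of_nonneg_left h2 hpos.le
      calc (0:ℝ) ≤ (1 + ε) * (P (T ⁻¹' Ioi (z - a))).toReal -
            (1 + ε) * ((P (Y₂ ⁻¹' Ioi z)).toReal * (1 / (1 + ε))) := by linarith
        _ = (1 + ε) * (P (T ⁻¹' Ioi (z - a))).toReal - (P (Y₂ ⁻¹' Ioi z)).toReal := by
            field_simp
  -- (A4') : hlow
  have hlow : ∀ ε : ℝ, 0 < ε → ∃ a : ℝ, 0 ≤ a ∧ ∀ᶠ x in atTop,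
      (1 - ε) * (mTail (FA P A X₁) x + mTail (FA P A X₂) x) ≤
        mTail (FA P A fun ω => X₁ ω + X₂ ω) (x - a) := by
    intro ε hε
    have hc1 : (1 : ℝ) - ε / 2 < 1 := by linarith
    obtain ⟨a, ha⟩ := (((hRtend R₂ hR₂m).eventually (eventually_ge_nhds hc1)).and
      (((hRtend R₁ hR₁m).eventually (eventually_ge_nhds hc1)).and
        (eventually_ge_atTop (0:ℝ)))).exists
    obtain ⟨hβ₂, hβ₁, ha0⟩ := ha
    refine ⟨a, ha0, ?_⟩
    have hf₂small : ∀ᶠ x in atTop, mTail (FA P A X₂) x ≤ ε / 2 :=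
      (tendsto_mTail_zero (FA P A X₂)).eventually (eventually_le_nhds (by linarith))
    filter_upwards [hf₂small] with x hx
    -- events
    set E₁ : Set Ω := Y₁ ⁻¹' Ioi x ∩ R₂ ⁻¹' Iic a with hE₁def
    set E₂ : Set Ω := Y₂ ⁻¹' Ioi x ∩ R₁ ⁻¹' Iic a with hE₂def
    have hmE₁ : MeasurableSet E₁ :=
      (hY₁m measurableSet_Ioi).inter (hR₂m measurableSet_Iic)
    have hmE₂ : MeasurableSet E₂ :=
      (hY₂m measurableSet_Ioi).inter (hR₁m measurableSet_Iic)
    have hsub : E₁ ∪ E₂ ⊆ T ⁻¹' Ioi (x - a) := by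
      rintro ω (⟨h1, h2⟩ | ⟨h1, h2⟩) <;>
      · simp only [mem_preimage, mem_Ioi, mem_Iic] at h1 h2 ⊢
        first
          | (have := hY₁le ω; linarith)
          | (have := hY₂le ω; linarith)
    have hkey : P (E₁ ∪ E₂) + P (E₁ ∩ E₂) = P E₁ + P E₂ :=
      measure_union_add_inter E₁ hmE₂
    have hPE₁ : (P E₁).toReal = (P (Y₁ ⁻¹' Ioi x)).toReal * (P (R₂ ⁻¹' Iic a)).toReal := by
      rw [hE₁def, hY₁R₂.measure_inter_preimage_eq_mul (Ioi x) (Iic a)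
        measurableSet_Ioi measurableSet_Iic, ENNReal.toReal_mul]
    have hPE₂ : (P E₂).toReal = (P (Y₂ ⁻¹' Ioi x)).toReal * (P (R₁ ⁻¹' Iic a)).toReal := by
      rw [hE₂def, hY₂R₁.measure_inter_preimage_eq_mul (Ioi x) (Iic a)
        measurableSet_Ioi measurableSet_Iic, ENNReal.toReal_mul]
    have hPinter : (P (E₁ ∩ E₂)).toReal ≤
        (P (Y₁ ⁻¹' Ioi x)).toReal * (P (Y₂ ⁻¹' Ioi x)).toReal := by
      rw [← ENNReal.toReal_mul,
        ← hYind.measure_inter_preimage_eq_mul (Ioi x) (Ioi x)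
          measurableSet_Ioi measurableSet_Ioi]
      refine ENNReal.toReal_mono (measure_ne_top _ _) (measure_mono ?_)
      rintro ω ⟨⟨ha1, _⟩, ⟨hb1, _⟩⟩
      exact ⟨ha1, hb1⟩
    have hkeyR : (P (E₁ ∪ E₂)).toReal + (P (E₁ ∩ E₂)).toReal =
        (P E₁).toReal + (P E₂).toReal := by
      have := congrArg ENNReal.toReal hkey
      rwa [ENNReal.toReal_add (measure_ne_top _ _) (measure_ne_top _ _),
        ENNReal.toReal_add (measure_ne_top _ _) (measure_ne_top _ _)] at this
    have hunle : (P (E₁ ∪ E₂)).toReal ≤ (P (T ⁻¹' Ioi (x - a))).toReal :=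
      ENNReal.toReal_mono (measure_ne_top _ _) (measure_mono hsub)
    rw [tail₁, tail₂] at *
    rw [tailν]
    set p₁ := (P (Y₁ ⁻¹' Ioi x)).toReal with hp₁
    set p₂ := (P (Y₂ ⁻¹' Ioi x)).toReal with hp₂
    have hp₁0 : 0 ≤ p₁ := ENNReal.toReal_nonneg
    have hp₂0 : 0 ≤ p₂ := ENNReal.toReal_nonneg
    have hβ₂' : (1 : ℝ) - ε / 2 ≤ (P (R₂ ⁻¹' Iic a)).toReal := hβ₂
    have hβ₁' : (1 : ℝ) - ε / 2 ≤ (P (R₁ ⁻¹' Iic a)).toReal := hβ₁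
    have h1 : (1 - ε / 2) * p₁ ≤ (P E₁).toReal := by
      rw [hPE₁]
      calc (1 - ε / 2) * p₁ = p₁ * (1 - ε / 2) := by ring
        _ ≤ p₁ * (P (R₂ ⁻¹' Iic a)).toReal := mul_le_mul_of_nonneg_left hβ₂' hp₁0
    have h2 : (1 - ε / 2) * p₂ ≤ (P E₂).toReal := by
      rw [hPE₂]
      calc (1 - ε / 2) * p₂ = p₂ * (1 - ε / 2) := by ring
        _ ≤ p₂ * (P (R₁ ⁻¹' Iic a)).toReal := mul_le_mul_of_nonneg_left hβ₁' hp₂0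
    have hcross : p₁ * p₂ ≤ (ε / 2) * p₁ := by
      calc p₁ * p₂ ≤ p₁ * (ε / 2) := mul_le_mul_of_nonneg_left hx hp₁0
        _ = (ε / 2) * p₁ := by ring
    nlinarith [hkeyR, hunle, hPinter, h1, h2, hcross]
  -- conclude via the core equivalence
  exact core_iff (FA P A X₁) (FA P A X₂) (FA P A fun ω => X₁ ω + X₂ ω)
    hs₁ hs₂ hsν h₁.1 h₂.1 hq_le_p hcomp hlow


end Paper
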